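/- arXiv:1205.6346 — 2 statements merged into one kernel-verified Lean document; each statement's English description precedes it below -/
import Mathlib

section
/- Let (σ_i)_{i∈Π} be a secure equilibrium in a multiplayer quantitative reachability game (G, v₀), with outcome ρ and cost profile (x_i)_{i∈Π}. Let h be a j-promising history w.r.t. (σ_i) for some player j ∈ Π, and assume, writing Π = {1, …, n}, that x₁ ≤ … ≤ x_k ≤ |h| < |h| + |V| ≤ x_{k+1} ≤ … ≤ x_l < x_{l+1} = … = x_n = +∞ where 0 ≤ k ≤ l ≤ n. Then the coalition Π ∖ {j} has a memoryless winning strategy from v = last(h) in the qualitative two-player zero-sum reachability under safety game 𝒢_{-j} = (G_{-j}, R, S), where: if j ≤ k then R = ∪_{i>k} F_i and S = V; if k < j ≤ l then R = V and S = V ∖ F_j; if l < j and Cost(ρ_{≤|h|}) ⪯_j Cost(h) then R = ∪_{i>k, i≠j} F_i and S = V ∖ F_j; and if l < j and not Cost(ρ_{≤|h|}) ⪯_j Cost(h) then R = V and S = V ∖ F_j. -/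
open scoped Classical ENat

/-- A multiplayer quantitative reachability game: a finite directed graph whose
vertices are partitioned among the players (via `owner`), every vertex has an
outgoing edge, and each player `i` has a nonempty goal set `F i`. -/
structure QRGame (ι V : Type) where
  owner : V → ι
  E : V → V → Prop
  total : ∀ v, ∃ w, E v w
  F : ι → Set V
  F_ne : ∀ i, (F i).Nonempty

namespace QRGame

variable {ι V : Type}

/-- Histories are encoded as *reversed* nonempty lists: the head is the current
vertex, the last element is the initial vertex `v₀`, and consecutive elements
are joined by edges of the graph. -/
def IsHist (G : QRGame ι V) (v₀ : V) : List V → Prop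
  | [] => False
  | [v] => v = v₀
  | v :: w :: t => G.E w v ∧ IsHist G v₀ (w :: t)

/-- The current (i.e. most recent) vertex of a history. -/
def cur (v₀ : V) (h : List V) : V := h.headD v₀

/-- `σ` is a valid strategy of player `i`: on every history whose current
vertex belongs to player `i`, it chooses a successor along an edge. -/
def IsStrat (G : QRGame ι V) (v₀ : V) (i : ι) (σ : List V → V) : Prop :=
  ∀ h : List V, G.IsHist v₀ h → G.owner (cur v₀ h) = i → G.E (cur v₀ h) (σ h)

/-- A strategy profile: one valid strategy for each player. -/
def IsProfile (G : QRGame ι V) (v₀ : V) (σ : ι → List V → V) : Prop :=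
  ∀ i, G.IsStrat v₀ i (σ i)

/-- The history reached after `n` further steps when all players follow the
profile `σ` from the history `h` on. -/
def histFrom (G : QRGame ι V) (v₀ : V) (σ : ι → List V → V) (h : List V) : ℕ → List V
  | 0 => h
  | n + 1 =>
      σ (G.owner (cur v₀ (histFrom G v₀ σ h n))) (histFrom G v₀ σ h n)
        :: histFrom G v₀ σ h n

/-- The full play (indexed from time `0`) whose prefix is the history `h` and
which is consistent with the profile `σ` after `h`. -/
def fullPlay (G : QRGame ι V) (v₀ : V) (σ : ι → List V → V) (h : List V) (t : ℕ) : V :=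
  (G.histFrom v₀ σ h t).reverse.getD t v₀

/-- The outcome `⟨(σ_i)⟩_{v₀}` of the profile `σ` from the initial vertex. -/
def outcome (G : QRGame ι V) (v₀ : V) (σ : ι → List V → V) : ℕ → V :=
  G.fullPlay v₀ σ [v₀]

/-- Cost of player `i` for a play `ρ`: the least `l` with `ρ l ∈ F i`,
and `⊤` (i.e. `+∞`) if there is no such `l`. -/
noncomputable def cost (G : QRGame ι V) (i : ι) (ρ : ℕ → V) : ℕ∞ :=
  ⨅ l ∈ {l : ℕ | ρ l ∈ G.F i}, (l : ℕ∞)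

/-- Cost of player `i` for the finite prefix `ρ₀ … ρ_{m-1}` of a play. -/
noncomputable def costLT (G : QRGame ι V) (i : ι) (ρ : ℕ → V) (m : ℕ) : ℕ∞ :=
  ⨅ l ∈ {l : ℕ | l < m ∧ ρ l ∈ G.F i}, (l : ℕ∞)

end QRGame

/-- The preference relation `≺_j` of player `j` on cost profiles:
`x ≺_j y` iff `x j > y j`, or `x j = y j`, every player's cost does not
decrease, and some player's cost strictly increases. -/
def Prec {ι : Type} (j : ι) (x y : ι → ℕ∞) : Prop :=
  y j < x j ∨ (x j = y j ∧ (∀ i, x i ≤ y i) ∧ ∃ i, x i < y i)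

namespace QRGame

variable {ι V : Type} [DecidableEq ι]

/-- `σ` restricted after the history `h` is a secure equilibrium in the subgame
`(G|_h, cur h)`: no player `j` has a `≺_j`-profitable deviation after `h`
(costs are computed on the whole play, including the prefix `h`). -/
def IsSecureAfter (G : QRGame ι V) (v₀ : V) (σ : ι → List V → V) (h : List V) : Prop :=
  ¬ ∃ (j : ι) (σ' : List V → V), G.IsStrat v₀ j σ' ∧
      Prec j (fun i => G.cost i (G.fullPlay v₀ σ h))
        (fun i => G.cost i (G.fullPlay v₀ (Function.update σ j σ') h))

/-- A secure equilibrium in `(G, v₀)`. -/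
def IsSecure (G : QRGame ι V) (v₀ : V) (σ : ι → List V → V) : Prop :=
  G.IsSecureAfter v₀ σ [v₀]

/-- A subgame perfect secure equilibrium: a secure equilibrium in every subgame. -/
def IsSPSE (G : QRGame ι V) (v₀ : V) (σ : ι → List V → V) : Prop :=
  ∀ h : List V, G.IsHist v₀ h → G.IsSecureAfter v₀ σ h

end QRGame

/-- `x ⪯_j y` iff `x ≺_j y` or `x = y`. -/
def PrecEq {ι : Type} (j : ι) (x y : ι → ℕ∞) : Prop := Prec j x y ∨ x = y

namespace QRGame

variable {ι V : Type}

/-- Cost of player `i` for a (reversed) finite history `h`: the least `l` such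
that the `l`-th vertex of `h` (in chronological order) is in `F i`, and `⊤` if
`h` does not visit `F i`. -/
noncomputable def histCost (G : QRGame ι V) (v₀ : V) (i : ι) (h : List V) : ℕ∞ :=
  G.costLT i (fun t => h.reverse.getD t v₀) h.length

/-- The (reversed) history `h` is consistent with `σ_{-j}`: at every step taken
from a vertex not owned by `j`, the move prescribed by the profile `σ` was
played. -/
def ConsistentWith (G : QRGame ι V) (v₀ : V) (σ : ι → List V → V) (j : ι) :
    List V → Prop
  | [] => True
  | [_] => True
  | v :: w :: t =>
      (G.owner w ≠ j → v = σ (G.owner w) (w :: t)) ∧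
        ConsistentWith G v₀ σ j (w :: t)

/-- The history `h` is `j`-promising w.r.t. the profile `σ` with cost profile
`x`, where `k` is such that `x` (sorted increasingly) satisfies
`x_k ≤ |h| < x_{k+1}` (players are `0`-based, so "player `j ≤ k`" reads
`(j : ℕ) < k`): `h` is consistent with `σ_{-j}` and the costs along `h` behave
as in Definition 5.2, the two cases being `x_{k+1} < +∞` and `x_{k+1} = +∞`. -/
noncomputable def Promising (G : QRGame ι V) (v₀ : V) (σ : ι → List V → V)
    (x : ι → ℕ∞) (k : ℕ) (val : ι → ℕ) (j : ι) (h : List V) : Prop :=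
  G.ConsistentWith v₀ σ j h ∧
    (if ∃ i : ι, k ≤ val i ∧ x i ≠ ⊤ then
      (if val j < k then
        G.histCost v₀ j h = x j ∧ ∀ i, x i ≤ G.histCost v₀ i h
      else G.histCost v₀ j h = ⊤)
    else
      G.histCost v₀ j h = x j ∧ (∀ i, x i ≤ G.histCost v₀ i h) ∧
        ∃ i, x i < G.histCost v₀ i h)

/-- The coalition `Π ∖ {j}` has a memoryless winning strategy from `v` in the
qualitative two-player zero-sum reachability under safety game `𝒢_{-j}`,
where the coalition (controlling the vertices not owned by `j`) aims at
reaching `R` while staying in `S`. -/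
def CoalitionWinsML (G : QRGame ι V) (j : ι) (R S : Set V) (v : V) : Prop :=
  ∃ f : V → V, (∀ u, G.E u (f u)) ∧
    ∀ ρ : ℕ → V, ρ 0 = v → (∀ t, G.E (ρ t) (ρ (t + 1))) →
      (∀ t, G.owner (ρ t) ≠ j → ρ (t + 1) = f (ρ t)) →
      (∃ t, ρ t ∈ R) ∧ ∀ t, ρ t ∈ S

end QRGame


noncomputable section ZeroSumAux

/-! ### Infima of sets of naturals in `ℕ∞` -/

def natInf (A : Set ℕ) : ℕ∞ := ⨅ l ∈ A, (l : ℕ∞)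

lemma natInf_le {A : Set ℕ} {n : ℕ} (h : n ∈ A) : natInf A ≤ n := iInf₂_le n h

lemma le_natInf {A : Set ℕ} {c : ℕ∞} (h : ∀ n ∈ A, c ≤ (n : ℕ∞)) : c ≤ natInf A :=
  le_iInf₂ h

lemma natInf_eq_top {A : Set ℕ} (h : ∀ n, n ∉ A) : natInf A = ⊤ :=
  le_antisymm le_top (le_natInf fun n hn => absurd hn (h n))

lemma natInf_anti {A B : Set ℕ} (h : A ⊆ B) : natInf B ≤ natInf A :=
  le_natInf fun n hn => natInf_le (h hn)

lemma natInf_spec {A : Set ℕ} (hA : A.Nonempty) :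
    ∃ n ∈ A, natInf A = (n : ℕ∞) ∧ ∀ m ∈ A, n ≤ m := by
  refine ⟨sInf A, Nat.sInf_mem hA, ?_, fun m hm => Nat.sInf_le hm⟩
  refine le_antisymm (natInf_le (Nat.sInf_mem hA)) (le_natInf fun n hn => ?_)
  exact_mod_cast Nat.sInf_le hn

lemma lt_natInf {A : Set ℕ} {c : ℕ∞} (hc : c ≠ ⊤) (h : ∀ n ∈ A, c < (n : ℕ∞)) :
    c < natInf A := by
  rcases Set.eq_empty_or_nonempty A with rfl | hA
  · rw [natInf_eq_top (by simp)]; exact lt_top_iff_ne_top.2 hc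
  · obtain ⟨n, hn, he, -⟩ := natInf_spec hA
    rw [he]; exact h n hn

lemma natInf_attained {A : Set ℕ} (h : natInf A ≠ ⊤) :
    ∃ n ∈ A, (n : ℕ∞) = natInf A := by
  rcases Set.eq_empty_or_nonempty A with rfl | hA
  · exact absurd (natInf_eq_top (by simp)) h
  · obtain ⟨n, hn, he, -⟩ := natInf_spec hA
    exact ⟨n, hn, he.symm⟩

lemma natInf_congr {A B : Set ℕ} (h : A = B) : natInf A = natInf B := by rw [h]

/-! ### Stabilization of monotone chains of subsets of a finite type -/

variable {V : Type} [Fintype V]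

lemma chain_card {C : ℕ → Set V} (mono : ∀ m, C m ⊆ C (m + 1)) (N : ℕ)
    (hstrict : ∀ i < N, C i ≠ C (i + 1)) : N + (C 0).ncard ≤ (C N).ncard := by
  induction N with
  | zero => simp
  | succ N ih =>
    have h1 : N + (C 0).ncard ≤ (C N).ncard := ih fun i hi => hstrict i (Nat.lt_succ_of_lt hi)
    have h2 : (C N).ncard < (C (N + 1)).ncard := by
      refine Set.ncard_lt_ncard ?_ (Set.toFinite _)
      exact (mono N).ssubset_of_ne (hstrict N (Nat.lt_succ_self N))
    omega

lemma chain_forward {C : ℕ → Set V}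
    (det : ∀ m, C m = C (m + 1) → C (m + 1) = C (m + 2)) {i : ℕ}
    (heq : C i = C (i + 1)) : ∀ m, C (i + m) = C i := by
  have step : ∀ m, C (i + m) = C (i + m + 1) := by
    intro m
    induction m with
    | zero => exact heq
    | succ m ih => exact det _ ih
  intro m
  induction m with
  | zero => rfl
  | succ m ih => rw [← ih]; exact (step m).symm

lemma chain_stab {C : ℕ → Set V} (mono : ∀ m, C m ⊆ C (m + 1))
    (det : ∀ m, C m = C (m + 1) → C (m + 1) = C (m + 2)) (N : ℕ)
    (hcard : Fintype.card V ≤ N + (C 0).ncard) : ∀ m, C (N + m) = C N := by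
  have key : C N = C (N + 1) := by
    by_cases hstrict : ∀ i < N, C i ≠ C (i + 1)
    · have huniv : C N = Set.univ := by
        have h1 := chain_card mono N hstrict
        refine Set.eq_of_subset_of_ncard_le (Set.subset_univ _) ?_ (Set.toFinite (Set.univ : Set V))
        rw [Set.ncard_univ, Nat.card_eq_fintype_card]; omega
      refine le_antisymm (mono N) ?_
      rw [huniv]; exact Set.subset_univ _
    · push_neg at hstrict
      obtain ⟨i, hi, heq⟩ := hstrict
      have h1 := chain_forward det heq (N - i)
      have h2 := chain_forward det heq (N + 1 - i)
      rw [Nat.add_sub_cancel' (le_of_lt hi)] at h1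
      rw [Nat.add_sub_cancel' (by omega : i ≤ N + 1)] at h2
      rw [h1, h2]
  exact chain_forward det key

lemma chain_iUnion_eq {C : ℕ → Set V} (mono : ∀ m, C m ⊆ C (m + 1))
    (det : ∀ m, C m = C (m + 1) → C (m + 1) = C (m + 2)) (N : ℕ)
    (hcard : Fintype.card V ≤ N + (C 0).ncard) : (⋃ m, C m) = C N := by
  refine le_antisymm (Set.iUnion_subset fun m => ?_) (Set.subset_iUnion C N)
  rcases le_or_gt m N with hm | hm
  · have : ∀ i j, i ≤ j → C i ⊆ C j := by
      intro i j hij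
      induction j with
      | zero => simp_all
      | succ j ih =>
        rcases Nat.eq_or_lt_of_le hij with rfl | hij'
        · exact le_refl _
        · exact (ih (by omega)).trans (mono j)
    exact this m N hm
  · rw [show m = N + (m - N) by omega, chain_stab mono det N hcard]

lemma chain_mono_le {C : ℕ → Set V} (mono : ∀ m, C m ⊆ C (m + 1)) :
    ∀ {i j}, i ≤ j → C i ⊆ C j := by
  intro i j hij
  induction j with
  | zero => simp_all
  | succ j ih =>
    rcases Nat.eq_or_lt_of_le hij with rfl | hij'
    · exact le_refl _
    · exact (ih (by omega)).trans (mono j)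

/-! ### Zero-sum reachability-under-safety games on finite graphs -/

section ZS

variable (E : V → V → Prop) (J : V → Prop) (R S : Set V)

/-- `j`'s attractor to `Sᶜ` (stages). -/
def Bset : ℕ → Set V
  | 0 => Sᶜ
  | m + 1 => Bset m ∪
      {u | (J u ∧ ∃ w, E u w ∧ w ∈ Bset m) ∨ (¬J u ∧ ∀ w, E u w → w ∈ Bset m)}

/-- The coalition's safety region for `S`. -/
def SafeSet : Set V := (⋃ m, Bset E J S m)ᶜ

/-- The coalition's attractor (within `SafeSet`) to `R ∩ SafeSet` (stages). -/
def Cset : ℕ → Set V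
  | 0 => R ∩ SafeSet E J S
  | m + 1 => Cset m ∪
      {u | u ∈ SafeSet E J S ∧
        ((¬J u ∧ ∃ w, E u w ∧ w ∈ Cset m) ∨ (J u ∧ ∀ w, E u w → w ∈ Cset m))}

/-- The coalition's winning region. -/
def Wset : Set V := ⋃ m, Cset E J R S m

variable {E J R S}

lemma Bset_mono : ∀ m, Bset E J S m ⊆ Bset E J S (m + 1) := fun _ =>
  Set.subset_union_left

lemma Bset_succ (m : ℕ) : Bset E J S (m + 1) = Bset E J S m ∪
    {u | (J u ∧ ∃ w, E u w ∧ w ∈ Bset E J S m) ∨ (¬J u ∧ ∀ w, E u w → w ∈ Bset E J S m)} :=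
  rfl

lemma Bset_det : ∀ m, Bset E J S m = Bset E J S (m + 1) →
    Bset E J S (m + 1) = Bset E J S (m + 2) := by
  intro m hm
  rw [Bset_succ (m + 1), ← hm, ← Bset_succ m]
  exact hm

lemma Cset_mono : ∀ m, Cset E J R S m ⊆ Cset E J R S (m + 1) := fun _ =>
  Set.subset_union_left

lemma Cset_succ (m : ℕ) : Cset E J R S (m + 1) = Cset E J R S m ∪
    {u | u ∈ SafeSet E J S ∧
      ((¬J u ∧ ∃ w, E u w ∧ w ∈ Cset E J R S m) ∨ (J u ∧ ∀ w, E u w → w ∈ Cset E J R S m))} :=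
  rfl

lemma Cset_det : ∀ m, Cset E J R S m = Cset E J R S (m + 1) →
    Cset E J R S (m + 1) = Cset E J R S (m + 2) := by
  intro m hm
  rw [Cset_succ (m + 1), ← hm, ← Cset_succ m]
  exact hm

lemma Bset_union_eq : (⋃ m, Bset E J S m) = Bset E J S (Fintype.card V) :=
  chain_iUnion_eq Bset_mono Bset_det _ (Nat.le_add_right _ _)

lemma Bset_union_eq' (hS : Sᶜ.Nonempty) :
    (⋃ m, Bset E J S m) = Bset E J S (Fintype.card V - 1) := by
  refine chain_iUnion_eq Bset_mono Bset_det _ ?_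
  have : 0 < (Sᶜ : Set V).ncard := (Set.ncard_pos (Set.toFinite _)).2 hS
  have : (Bset E J S 0).ncard = (Sᶜ : Set V).ncard := rfl
  omega

lemma Wset_eq : Wset E J R S = Cset E J R S (Fintype.card V) :=
  chain_iUnion_eq Cset_mono Cset_det _ (Nat.le_add_right _ _)

lemma Cset_subset_Safe : ∀ m, Cset E J R S m ⊆ SafeSet E J S
  | 0 => Set.inter_subset_right
  | m + 1 => by
      intro u hu
      rcases hu with hu | hu
      · exact Cset_subset_Safe m hu
      · exact hu.1

lemma Wset_subset_Safe : Wset E J R S ⊆ SafeSet E J S :=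
  Set.iUnion_subset Cset_subset_Safe

lemma Safe_subset_S : SafeSet E J S ⊆ S := by
  intro u hu
  by_contra hc
  exact hu (Set.mem_iUnion.2 ⟨0, hc⟩)

lemma mem_Bset_succ_of {u : V} {m : ℕ}
    (h : (J u ∧ ∃ w, E u w ∧ w ∈ Bset E J S m) ∨ (¬J u ∧ ∀ w, E u w → w ∈ Bset E J S m)) :
    u ∈ Bset E J S (m + 1) := Set.mem_union_right _ h

lemma Safe_step_J {u : V} (hu : u ∈ SafeSet E J S) (hJ : J u) :
    ∀ w, E u w → w ∈ SafeSet E J S := by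
  intro w hw hwB
  obtain ⟨m, hm⟩ := Set.mem_iUnion.1 hwB
  exact hu (Set.mem_iUnion.2 ⟨m + 1, mem_Bset_succ_of (Or.inl ⟨hJ, w, hw, hm⟩)⟩)

lemma Safe_step_coal {u : V} (hu : u ∈ SafeSet E J S) (hJ : ¬J u)
    (htot : ∃ w, E u w) : ∃ w, E u w ∧ w ∈ SafeSet E J S := by
  by_contra hc
  push_neg at hc
  refine hu (Set.mem_iUnion.2 ⟨Fintype.card V + 1, mem_Bset_succ_of (Or.inr ⟨hJ, fun w hw => ?_⟩)⟩)
  have : w ∈ ⋃ m, Bset E J S m := by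
    by_contra h'
    exact hc w hw h'
  rw [Bset_union_eq] at this
  exact this

lemma Cset_rank_unique {u : V} {m m' : ℕ}
    (h1 : u ∈ Cset E J R S (m + 1)) (h2 : u ∉ Cset E J R S m)
    (h3 : u ∈ Cset E J R S (m' + 1)) (h4 : u ∉ Cset E J R S m') : m = m' := by
  by_contra hne
  rcases Nat.lt_or_ge m m' with hlt | hge
  · exact h4 (chain_mono_le Cset_mono hlt h1)
  · rcases Nat.eq_or_lt_of_le hge with rfl | hlt
    · exact hne rfl
    · exact h2 (chain_mono_le Cset_mono hlt h3)

lemma Bset_rank_unique {u : V} {m m' : ℕ}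
    (h1 : u ∈ Bset E J S (m + 1)) (h2 : u ∉ Bset E J S m)
    (h3 : u ∈ Bset E J S (m' + 1)) (h4 : u ∉ Bset E J S m') : m = m' := by
  by_contra hne
  rcases Nat.lt_or_ge m m' with hlt | hge
  · exact h4 (chain_mono_le Bset_mono hlt h1)
  · rcases Nat.eq_or_lt_of_le hge with rfl | hlt
    · exact hne rfl
    · exact h2 (chain_mono_le Bset_mono hlt h3)

lemma exists_coal_strategy (htot : ∀ v : V, ∃ w, E v w) :
    ∃ f : V → V, ∀ u, E u (f u) ∧
      (¬J u → ((u ∈ SafeSet E J S → f u ∈ SafeSet E J S) ∧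
        ∀ m, u ∈ Cset E J R S (m + 1) → u ∉ Cset E J R S m →
          f u ∈ Cset E J R S m)) := by
  have key : ∀ u : V, ∃ w, E u w ∧
      (¬J u → ((u ∈ SafeSet E J S → w ∈ SafeSet E J S) ∧
        ∀ m, u ∈ Cset E J R S (m + 1) → u ∉ Cset E J R S m →
          w ∈ Cset E J R S m)) := by
    intro u
    by_cases hJ : J u
    · obtain ⟨w, hw⟩ := htot u
      exact ⟨w, hw, fun h => absurd hJ h⟩
    · by_cases hW : ∃ m, u ∈ Cset E J R S (m + 1) ∧ u ∉ Cset E J R S m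
      · obtain ⟨m, hm1, hm2⟩ := hW
        have hm1' := hm1
        rw [Cset_succ] at hm1'
        rcases hm1' with h' | h'
        · exact absurd h' hm2
        · rcases h'.2 with ⟨-, w, hw, hwC⟩ | ⟨hJ', -⟩
          · refine ⟨w, hw, fun _ => ⟨fun _ => Cset_subset_Safe m hwC, fun m'' hm1'' hm2'' => ?_⟩⟩
            rwa [← Cset_rank_unique hm1 hm2 hm1'' hm2'']
          · exact absurd hJ' hJ
      · by_cases hS : u ∈ SafeSet E J S
        · obtain ⟨w, hw, hwS⟩ := Safe_step_coal hS hJ (htot u)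
          exact ⟨w, hw, fun _ => ⟨fun _ => hwS, fun m hm1 hm2 => absurd ⟨m, hm1, hm2⟩ hW⟩⟩
        · obtain ⟨w, hw⟩ := htot u
          exact ⟨w, hw, fun _ => ⟨fun h => absurd h hS, fun m hm1 hm2 => absurd ⟨m, hm1, hm2⟩ hW⟩⟩
  choose f hf using key
  exact ⟨f, hf⟩

lemma coal_reach {f : V → V}
    (hf : ∀ u, E u (f u) ∧ (¬J u → ((u ∈ SafeSet E J S → f u ∈ SafeSet E J S) ∧
      ∀ m, u ∈ Cset E J R S (m + 1) → u ∉ Cset E J R S m → f u ∈ Cset E J R S m))) :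
    ∀ m (ρ : ℕ → V), (∀ t, E (ρ t) (ρ (t + 1))) →
      (∀ t, ¬J (ρ t) → ρ (t + 1) = f (ρ t)) →
      ρ 0 ∈ Cset E J R S m → ∃ t, ρ t ∈ Cset E J R S 0 := by
  intro m
  induction m with
  | zero => exact fun ρ _ _ h0 => ⟨0, h0⟩
  | succ m ih =>
    intro ρ hedge hfol h0
    by_cases hm : ρ 0 ∈ Cset E J R S m
    · exact ih ρ hedge hfol hm
    · have h1 : ρ 1 ∈ Cset E J R S m := by
        have hmem := h0
        rw [Cset_succ] at hmem
        rcases hmem with h' | h'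
        · exact absurd h' hm
        · rcases h'.2 with ⟨hJ, -⟩ | ⟨hJ, hall⟩
          · rw [hfol 0 hJ]
            exact (hf (ρ 0)).2 hJ |>.2 m h0 hm
          · exact hall _ (hedge 0)
      obtain ⟨t, ht⟩ := ih (fun t => ρ (t + 1)) (fun t => hedge (t + 1))
        (fun t => hfol (t + 1)) h1
      exact ⟨t + 1, ht⟩

lemma coal_safe {f : V → V}
    (hf : ∀ u, E u (f u) ∧ (¬J u → ((u ∈ SafeSet E J S → f u ∈ SafeSet E J S) ∧
      ∀ m, u ∈ Cset E J R S (m + 1) → u ∉ Cset E J R S m → f u ∈ Cset E J R S m)))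
    (ρ : ℕ → V) (hedge : ∀ t, E (ρ t) (ρ (t + 1)))
    (hfol : ∀ t, ¬J (ρ t) → ρ (t + 1) = f (ρ t))
    (h0 : ρ 0 ∈ SafeSet E J S) : ∀ t, ρ t ∈ SafeSet E J S := by
  intro t
  induction t with
  | zero => exact h0
  | succ t ih =>
    by_cases hJ : J (ρ t)
    · exact Safe_step_J ih hJ _ (hedge t)
    · rw [hfol t hJ]
      exact (hf (ρ t)).2 hJ |>.1 ih

lemma coal_win (htot : ∀ v : V, ∃ w, E v w) {v : V} (hv : v ∈ Wset E J R S) :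
    ∃ f : V → V, (∀ u, E u (f u)) ∧
      ∀ ρ : ℕ → V, ρ 0 = v → (∀ t, E (ρ t) (ρ (t + 1))) →
        (∀ t, ¬J (ρ t) → ρ (t + 1) = f (ρ t)) →
        (∃ t, ρ t ∈ R) ∧ ∀ t, ρ t ∈ S := by
  obtain ⟨f, hf⟩ := exists_coal_strategy (J := J) (R := R) (S := S) htot
  refine ⟨f, fun u => (hf u).1, fun ρ h0 hedge hfol => ?_⟩
  obtain ⟨m, hm⟩ := Set.mem_iUnion.1 (h0 ▸ hv)
  obtain ⟨t, ht⟩ := coal_reach hf m ρ hedge hfol hm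
  refine ⟨⟨t, ht.1⟩, fun t => Safe_subset_S (E := E) (J := J) ?_⟩
  exact coal_safe hf ρ hedge hfol (Cset_subset_Safe m hm) t

lemma exists_j_strategy (htot : ∀ v : V, ∃ w, E v w) :
    ∃ g : V → V, ∀ u, E u (g u) ∧
      (J u → ((∀ m, u ∈ Bset E J S (m + 1) → u ∉ Bset E J S m → g u ∈ Bset E J S m) ∧
        (u ∈ SafeSet E J S → u ∉ Wset E J R S → g u ∉ Wset E J R S))) := by
  have key : ∀ u : V, ∃ w, E u w ∧
      (J u → ((∀ m, u ∈ Bset E J S (m + 1) → u ∉ Bset E J S m → w ∈ Bset E J S m) ∧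
        (u ∈ SafeSet E J S → u ∉ Wset E J R S → w ∉ Wset E J R S))) := by
    intro u
    by_cases hJ : J u
    · by_cases hB : ∃ m, u ∈ Bset E J S (m + 1) ∧ u ∉ Bset E J S m
      · obtain ⟨m, hm1, hm2⟩ := hB
        have hm1' := hm1
        rw [Bset_succ] at hm1'
        rcases hm1' with h' | h'
        · exact absurd h' hm2
        · rcases h' with ⟨-, w, hw, hwB⟩ | ⟨hJ', -⟩
          · refine ⟨w, hw, fun _ => ⟨fun m'' hm1'' hm2'' => ?_, fun hS _ => ?_⟩⟩
            · rwa [← Bset_rank_unique hm1 hm2 hm1'' hm2'']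
            · exact absurd (Set.mem_iUnion.2 ⟨m + 1, hm1⟩) hS
          · exact absurd hJ hJ'
      · by_cases hSW : u ∈ SafeSet E J S ∧ u ∉ Wset E J R S
        · have : ∃ w, E u w ∧ w ∉ Wset E J R S := by
            by_contra hc
            push_neg at hc
            refine hSW.2 (Set.mem_iUnion.2 ⟨Fintype.card V + 1, ?_⟩)
            rw [Cset_succ]
            refine Set.mem_union_right _ ⟨hSW.1, Or.inr ⟨hJ, fun w hw => ?_⟩⟩
            rw [← Wset_eq]
            exact hc w hw
          obtain ⟨w, hw, hwW⟩ := this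
          exact ⟨w, hw, fun _ => ⟨fun m hm1 hm2 => absurd ⟨m, hm1, hm2⟩ hB,
            fun _ _ => hwW⟩⟩
        · obtain ⟨w, hw⟩ := htot u
          refine ⟨w, hw, fun _ => ⟨fun m hm1 hm2 => absurd ⟨m, hm1, hm2⟩ hB,
            fun hS hW => absurd ⟨hS, hW⟩ hSW⟩⟩
    · obtain ⟨w, hw⟩ := htot u
      exact ⟨w, hw, fun h => absurd h hJ⟩
  choose g hg using key
  exact ⟨g, hg⟩

lemma j_reach {g : V → V}
    (hg : ∀ u, E u (g u) ∧
      (J u → ((∀ m, u ∈ Bset E J S (m + 1) → u ∉ Bset E J S m → g u ∈ Bset E J S m) ∧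
        (u ∈ SafeSet E J S → u ∉ Wset E J R S → g u ∉ Wset E J R S)))) :
    ∀ m (ρ : ℕ → V), (∀ t, E (ρ t) (ρ (t + 1))) →
      (∀ t, J (ρ t) → ρ (t + 1) = g (ρ t)) →
      ρ 0 ∈ Bset E J S m → ∃ t ≤ m, ρ t ∉ S := by
  intro m
  induction m with
  | zero => exact fun ρ _ _ h0 => ⟨0, le_refl 0, h0⟩
  | succ m ih =>
    intro ρ hedge hfol h0
    by_cases hm : ρ 0 ∈ Bset E J S m
    · obtain ⟨t, ht, ht'⟩ := ih ρ hedge hfol hm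
      exact ⟨t, ht.trans (Nat.le_succ m), ht'⟩
    · have h1 : ρ 1 ∈ Bset E J S m := by
        have hmem := h0
        rw [Bset_succ] at hmem
        rcases hmem with h' | h'
        · exact absurd h' hm
        · rcases h' with ⟨hJ, -⟩ | ⟨-, hall⟩
          · rw [hfol 0 hJ]
            exact (hg (ρ 0)).2 hJ |>.1 m h0 hm
          · exact hall _ (hedge 0)
      obtain ⟨t, ht, ht'⟩ := ih (fun t => ρ (t + 1)) (fun t => hedge (t + 1))
        (fun t => hfol (t + 1)) h1
      exact ⟨t + 1, Nat.succ_le_succ ht, ht'⟩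

lemma j_win {g : V → V}
    (hg : ∀ u, E u (g u) ∧
      (J u → ((∀ m, u ∈ Bset E J S (m + 1) → u ∉ Bset E J S m → g u ∈ Bset E J S m) ∧
        (u ∈ SafeSet E J S → u ∉ Wset E J R S → g u ∉ Wset E J R S))))
    (ρ : ℕ → V) (hedge : ∀ t, E (ρ t) (ρ (t + 1)))
    (hfol : ∀ t, J (ρ t) → ρ (t + 1) = g (ρ t))
    (h0 : ρ 0 ∉ Wset E J R S) : (∃ t, ρ t ∉ S) ∨ (∀ t, ρ t ∉ R) := by
  by_cases hS : ∃ t, ρ t ∉ S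
  · exact Or.inl hS
  · push_neg at hS
    have hsafe : ∀ t, ρ t ∈ SafeSet E J S := by
      intro t
      by_contra hc
      have : ρ t ∈ ⋃ m, Bset E J S m := not_not.1 hc
      obtain ⟨m, hm⟩ := Set.mem_iUnion.1 this
      obtain ⟨s, -, hs⟩ := j_reach (R := R) hg m (fun s => ρ (t + s))
        (fun s => by rw [Nat.add_succ]; exact hedge (t + s))
        (fun s hJ => by rw [Nat.add_succ]; exact hfol (t + s) hJ) hm
      exact hs (hS (t + s))
    have hW : ∀ t, ρ t ∉ Wset E J R S := by
      intro t
      induction t with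
      | zero => exact h0
      | succ t ih =>
        by_cases hJ : J (ρ t)
        · rw [hfol t hJ]
          exact (hg (ρ t)).2 hJ |>.2 (hsafe t) ih
        · intro hc
          refine ih (Set.mem_iUnion.2 ⟨Fintype.card V + 1, ?_⟩)
          rw [Cset_succ]
          refine Set.mem_union_right _ ⟨hsafe t, Or.inl ⟨hJ, ρ (t + 1), hedge t, ?_⟩⟩
          rw [← Wset_eq]
          exact hc
    refine Or.inr fun t ht => ?_
    exact hW t (Set.mem_iUnion.2 ⟨0, ⟨ht, hsafe t⟩⟩)

end ZS

end ZeroSumAux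

/-! ### History and play bookkeeping lemmas -/

namespace QRGame

variable {ι V : Type}

lemma isHist_length_pos {G : QRGame ι V} {v₀ : V} {h : List V} (hh : G.IsHist v₀ h) :
    1 ≤ h.length := by
  cases h with
  | nil => exact absurd hh (by simp [IsHist])
  | cons a t => simp

lemma hist_edge {G : QRGame ι V} {v₀ : V} :
    ∀ {h : List V}, G.IsHist v₀ h → ∀ i, i + 1 < h.length →
      G.E (h.getD (i + 1) v₀) (h.getD i v₀) := by
  intro h
  induction h with
  | nil => intro hh; exact absurd hh (by simp [IsHist])
  | cons a t ih =>
    intro hh i hi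
    cases t with
    | nil => simp at hi
    | cons w t' =>
      obtain ⟨he, hh'⟩ := hh
      cases i with
      | zero => simpa using he
      | succ i =>
        have := ih hh' i (by simpa using hi)
        simpa using this

lemma hist_drop_last {G : QRGame ι V} {v₀ : V} :
    ∀ {h : List V}, G.IsHist v₀ h → h.drop (h.length - 1) = [v₀] := by
  intro h
  induction h with
  | nil => intro hh; exact absurd hh (by simp [IsHist])
  | cons a t ih =>
    intro hh
    cases t with
    | nil => simpa [IsHist] using hh
    | cons w t' =>
      obtain ⟨-, hh'⟩ := hh
      have := ih hh'
      simpa using this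

lemma consistent_getD {G : QRGame ι V} {v₀ : V} {σ : ι → List V → V} {j : ι} :
    ∀ {h : List V}, G.ConsistentWith v₀ σ j h → ∀ i, i + 1 < h.length →
      G.owner (h.getD (i + 1) v₀) ≠ j →
      h.getD i v₀ = σ (G.owner (h.getD (i + 1) v₀)) (h.drop (i + 1)) := by
  intro h
  induction h with
  | nil => intro _ i hi; simp at hi
  | cons a t ih =>
    intro hc i hi ho
    cases t with
    | nil => simp at hi
    | cons w t' =>
      obtain ⟨hc1, hc2⟩ := hc
      cases i with
      | zero => simpa using hc1 (by simpa using ho)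
      | succ i =>
        have := ih hc2 i (by simpa using hi) (by simpa using ho)
        simpa using this

lemma getD_reverse (l : List V) (d : V) (t : ℕ) (ht : t < l.length) :
    l.reverse.getD t d = l.getD (l.length - 1 - t) d := by
  rw [List.getD_eq_getElem _ _ (by simpa using ht), List.getD_eq_getElem _ _ (by omega)]
  exact List.getElem_reverse _

lemma cur_drop (h : List V) (v₀ : V) (i : ℕ) (hi : i < h.length) :
    cur v₀ (h.drop i) = h.getD i v₀ := by
  rw [cur, List.headD_eq_head?_getD, List.head?_drop, List.getD_eq_getElem?_getD]

lemma histFrom_length (G : QRGame ι V) (v₀ : V) (τ : ι → List V → V) (h : List V) :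
    ∀ m, (G.histFrom v₀ τ h m).length = h.length + m
  | 0 => rfl
  | m + 1 => by
      show (_ :: G.histFrom v₀ τ h m).length = _
      rw [List.length_cons, histFrom_length G v₀ τ h m, Nat.add_assoc]

lemma histFrom_isHist {G : QRGame ι V} {v₀ : V} {τ : ι → List V → V} {h : List V}
    (hh : G.IsHist v₀ h) (hτ : G.IsProfile v₀ τ) :
    ∀ m, G.IsHist v₀ (G.histFrom v₀ τ h m)
  | 0 => hh
  | m + 1 => by
      have ih := histFrom_isHist hh hτ m
      show G.IsHist v₀ (τ (G.owner (cur v₀ (G.histFrom v₀ τ h m))) (G.histFrom v₀ τ h m)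
        :: G.histFrom v₀ τ h m)
      cases hm : G.histFrom v₀ τ h m with
      | nil => rw [hm] at ih; exact absurd ih (by simp [IsHist])
      | cons w t =>
        rw [hm] at ih
        refine ⟨?_, ih⟩
        have := hτ (G.owner (cur v₀ (w :: t))) (w :: t) ih rfl
        simpa [cur] using this

/-- The deviation strategy of player `j`: follow the history `h` while the
current history is a strict prefix of it, then play the memoryless `g`. -/
noncomputable def devStrat (G : QRGame ι V) (v₀ : V) (g : V → V) (h : List V) :
    List V → V := fun h' =>
  if h'.length < h.length ∧ h' = h.drop (h.length - h'.length) then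
    h.getD (h.length - h'.length - 1) v₀
  else g (cur v₀ h')

lemma devStrat_isStrat (G : QRGame ι V) (v₀ : V) (g : V → V) (h : List V)
    (hg : ∀ u, G.E u (g u)) (hh : G.IsHist v₀ h) (j : ι) :
    G.IsStrat v₀ j (devStrat G v₀ g h) := by
  intro h' hh' _
  unfold devStrat
  split_ifs with hc
  · obtain ⟨hlt, heq⟩ := hc
    have h'pos : 1 ≤ h'.length := isHist_length_pos hh'
    set m := h.length - h'.length with hm
    have hm1 : 1 ≤ m := by omega
    have hm2 : m < h.length := by omega
    have hcur : cur v₀ h' = h.getD m v₀ := by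
      rw [heq]; exact cur_drop h v₀ m hm2
    rw [hcur]
    have := hist_edge hh (m - 1) (by omega)
    rwa [show m - 1 + 1 = m by omega] at this
  · exact hg _

lemma getD_zero_eq_headD (l : List V) (d : V) : l.getD 0 d = l.headD d := by
  cases l <;> simp

lemma cost_def (G : QRGame ι V) (i : ι) (ρ : ℕ → V) :
    G.cost i ρ = natInf {l | ρ l ∈ G.F i} := rfl

lemma costLT_def (G : QRGame ι V) (i : ι) (ρ : ℕ → V) (m : ℕ) :
    G.costLT i ρ m = natInf {l | l < m ∧ ρ l ∈ G.F i} := rfl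

lemma histCost_def (G : QRGame ι V) (v₀ : V) (i : ι) (h : List V) :
    G.histCost v₀ i h = natInf {l | l < h.length ∧ h.reverse.getD l v₀ ∈ G.F i} := rfl

lemma deviation_play [DecidableEq ι] (G : QRGame ι V) (v₀ : V)
    (σ : ι → List V → V) (hprof : G.IsProfile v₀ σ) (j : ι) (h : List V)
    (hh : G.IsHist v₀ h) (hcons : G.ConsistentWith v₀ σ j h)
    (g : V → V) (hg : ∀ u, G.E u (g u)) :
    (∀ t, t < h.length →
      G.fullPlay v₀ (Function.update σ j (devStrat G v₀ g h)) [v₀] t =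
        h.reverse.getD t v₀) ∧
    (∀ t, G.E (G.fullPlay v₀ (Function.update σ j (devStrat G v₀ g h)) [v₀] t)
      (G.fullPlay v₀ (Function.update σ j (devStrat G v₀ g h)) [v₀] (t + 1))) ∧
    (∀ s, G.owner (G.fullPlay v₀ (Function.update σ j (devStrat G v₀ g h)) [v₀]
        (h.length - 1 + s)) = j →
      G.fullPlay v₀ (Function.update σ j (devStrat G v₀ g h)) [v₀]
          (h.length - 1 + s + 1) =
        g (G.fullPlay v₀ (Function.update σ j (devStrat G v₀ g h)) [v₀]
          (h.length - 1 + s))) := by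
  have hlen1 : 1 ≤ h.length := isHist_length_pos hh
  set σ' := devStrat G v₀ g h with hσ'def
  set τ := Function.update σ j σ' with hτdef
  have hτ : G.IsProfile v₀ τ := by
    intro i
    by_cases hij : i = j
    · subst hij
      rw [hτdef, Function.update_self]
      exact devStrat_isStrat G v₀ g h hg hh i
    · rw [hτdef, Function.update_of_ne hij]
      exact hprof i
  set H := G.histFrom v₀ τ [v₀] with hHdef
  have hHlen : ∀ m, (H m).length = m + 1 := by
    intro m
    rw [hHdef, histFrom_length]
    simp [Nat.add_comm]
  have hHhist : ∀ m, G.IsHist v₀ (H m) :=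
    histFrom_isHist (by simp [IsHist]) hτ
  have hcur : ∀ t, G.fullPlay v₀ τ [v₀] t = cur v₀ (H t) := by
    intro t
    show (H t).reverse.getD t v₀ = cur v₀ (H t)
    rw [getD_reverse _ _ _ (by rw [hHlen]; omega), hHlen,
      show t + 1 - 1 - t = 0 by omega, getD_zero_eq_headD]
    rfl
  have hHsucc : ∀ m, H (m + 1) = τ (G.owner (cur v₀ (H m))) (H m) :: H m := fun m => rfl
  have hpre : ∀ m, m ≤ h.length - 1 → H m = h.drop (h.length - 1 - m) := by
    intro m
    induction m with
    | zero =>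
      intro _
      rw [Nat.sub_zero, hist_drop_last hh]
      rfl
    | succ m ih =>
      intro hm
      have ihm := ih (by omega)
      set i := h.length - 1 - m with hidef
      have hi1 : 1 ≤ i := by omega
      have hi2 : i < h.length := by omega
      have hcurm : cur v₀ (H m) = h.getD i v₀ := by
        rw [ihm]; exact cur_drop h v₀ i hi2
      have hdropeq : h.drop (h.length - 1 - (m + 1)) = h.getD (i - 1) v₀ :: h.drop i := by
        rw [show h.length - 1 - (m + 1) = i - 1 by omega,
          List.drop_eq_getElem_cons (by omega : i - 1 < h.length),
          show i - 1 + 1 = i by omega, List.getD_eq_getElem h v₀ (by omega : i - 1 < h.length)]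
      rw [hHsucc m, hdropeq, hcurm, ← ihm]
      congr 1
      by_cases howner : G.owner (h.getD i v₀) = j
      · rw [howner, hτdef, Function.update_self, hσ'def, devStrat, ihm]
        have hll : (h.drop i).length = h.length - i := List.length_drop
        rw [if_pos ?_]
        · congr 1
          rw [hll]
          omega
        · constructor
          · omega
          · rw [hll, show h.length - (h.length - i) = i by omega]
      · rw [hτdef, Function.update_of_ne howner, ihm]
        have := consistent_getD hcons (i - 1) (by omega)
        rw [show i - 1 + 1 = i by omega] at this
        exact (this howner).symm
  refine ⟨?_, ?_, ?_⟩
  · intro t ht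
    rw [hcur t, hpre t (by omega), cur_drop h v₀ _ (by omega),
      getD_reverse h v₀ t ht]
  · intro t
    rw [hcur t, hcur (t + 1), hHsucc t]
    have := hτ (G.owner (cur v₀ (H t))) (H t) (hHhist t) rfl
    simpa [cur] using this
  · intro s howner
    rw [hcur (h.length - 1 + s + 1), hHsucc (h.length - 1 + s)]
    rw [hcur (h.length - 1 + s)] at howner
    show cur v₀ (τ (G.owner (cur v₀ (H (h.length - 1 + s)))) (H (h.length - 1 + s))
      :: H (h.length - 1 + s)) = _
    rw [show cur v₀ (τ (G.owner (cur v₀ (H (h.length - 1 + s)))) (H (h.length - 1 + s))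
        :: H (h.length - 1 + s)) =
      τ (G.owner (cur v₀ (H (h.length - 1 + s)))) (H (h.length - 1 + s)) from rfl]
    rw [howner, hτdef, Function.update_self, hσ'def, devStrat, if_neg, hcur]
    rw [hHlen]
    omega
  -- done

end QRGame

/-- Lemma 5.3: let `(σ_i)` be a secure equilibrium with outcome `ρ` and cost
profile `x`, and `h` a `j`-promising history w.r.t. `(σ_i)`.  Writing the
players as `0, …, n-1` (so that the paper's `1`-based "`x₁ ≤ … ≤ x_k ≤ |h| <
|h| + |V| ≤ x_{k+1} ≤ … ≤ x_l < x_{l+1} = … = x_n = +∞`" becomes the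
hypotheses below, with `|h| = h.length - 1` the number of edges of `h`), the
coalition `Π ∖ {j}` has a memoryless winning strategy from `v = last(h)` in
the reachability under safety game `𝒢_{-j} = (G_{-j}, R, S)` with `R` and `S`
as prescribed by the four cases of the lemma. -/
theorem coalition_memoryless_winning_strategy
    {V : Type} [Fintype V] {n : ℕ}
    (G : QRGame (Fin n) V) (v₀ : V)
    (σ : Fin n → List V → V) (hprof : G.IsProfile v₀ σ) (hsec : G.IsSecure v₀ σ)
    (x : Fin n → ℕ∞) (hx : ∀ i, x i = G.cost i (G.outcome v₀ σ))
    (hmono : Monotone x)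
    (j : Fin n) (h : List V) (hhist : G.IsHist v₀ h)
    (k l : ℕ) (hkl : k ≤ l) (hln : l ≤ n)
    (hk : ∀ i : Fin n, (i : ℕ) < k → x i ≤ ((h.length - 1 : ℕ) : ℕ∞))
    (hk' : ∀ i : Fin n, k ≤ (i : ℕ) →
      ((h.length - 1 + Fintype.card V : ℕ) : ℕ∞) ≤ x i)
    (hl : ∀ i : Fin n, (i : ℕ) < l → x i ≠ ⊤)
    (hl' : ∀ i : Fin n, l ≤ (i : ℕ) → x i = ⊤)
    (hprom : G.Promising v₀ σ x k (fun i => (i : ℕ)) j h) :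
    (((j : ℕ) < k →
        G.CoalitionWinsML j (⋃ i ∈ {i : Fin n | k ≤ (i : ℕ)}, G.F i)
          Set.univ (QRGame.cur v₀ h)) ∧
      (k ≤ (j : ℕ) → (j : ℕ) < l →
        G.CoalitionWinsML j Set.univ (G.F j)ᶜ (QRGame.cur v₀ h)) ∧
      (l ≤ (j : ℕ) →
        PrecEq j (fun i => G.costLT i (G.outcome v₀ σ) h.length)
          (fun i => G.histCost v₀ i h) →
        G.CoalitionWinsML j (⋃ i ∈ {i : Fin n | k ≤ (i : ℕ) ∧ i ≠ j}, G.F i)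
          (G.F j)ᶜ (QRGame.cur v₀ h)) ∧
      (l ≤ (j : ℕ) →
        ¬ PrecEq j (fun i => G.costLT i (G.outcome v₀ σ) h.length)
          (fun i => G.histCost v₀ i h) →
        G.CoalitionWinsML j Set.univ (G.F j)ᶜ (QRGame.cur v₀ h))) := by
  classical
  have hV : 0 < Fintype.card V := Fintype.card_pos_iff.2 ⟨v₀⟩
  have hlen1 : 1 ≤ h.length := QRGame.isHist_length_pos hhist
  obtain ⟨hcons, hcost⟩ := hprom
  set J : V → Prop := fun u => G.owner u = j with hJdef
  -- facts from the promising hypothesis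
  have hfacts1 : (j : ℕ) < k →
      G.histCost v₀ j h = x j ∧ ∀ i, x i ≤ G.histCost v₀ i h := by
    intro hjk
    by_cases hP : ∃ i : Fin n, k ≤ (i : ℕ) ∧ x i ≠ ⊤
    · rw [if_pos hP, if_pos hjk] at hcost
      exact hcost
    · rw [if_neg hP] at hcost
      exact ⟨hcost.1, hcost.2.1⟩
  have hfacts2 : k ≤ (j : ℕ) → G.histCost v₀ j h = ⊤ := by
    intro hjk
    by_cases hP : ∃ i : Fin n, k ≤ (i : ℕ) ∧ x i ≠ ⊤
    · rw [if_pos hP, if_neg (by omega : ¬ (j : ℕ) < k)] at hcost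
      exact hcost
    · rw [if_neg hP] at hcost
      push_neg at hP
      rw [hcost.1]
      exact hP j hjk
  have hfacts3 : (¬ ∃ i : Fin n, k ≤ (i : ℕ) ∧ x i ≠ ⊤) →
      (∀ i, x i ≤ G.histCost v₀ i h) ∧ ∃ i₀, x i₀ < G.histCost v₀ i₀ h := by
    intro hP
    rw [if_neg hP] at hcost
    exact ⟨hcost.2.1, hcost.2.2⟩
  -- the equilibrium cost profile is the cost of the outcome
  have hxfun : (fun i => G.cost i (G.fullPlay v₀ σ [v₀])) = x :=
    funext fun i => (hx i).symm
  -- ℕ∞ facts about x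
  have hxbig : ∀ i : Fin n, k ≤ (i : ℕ) → ((h.length : ℕ) : ℕ∞) ≤ x i := by
    intro i hik
    refine le_trans ?_ (hk' i hik)
    exact_mod_cast (by omega : h.length ≤ h.length - 1 + Fintype.card V)
  -- no deviation can be profitable
  have sec' : ∀ g : V → V, (∀ u, G.E u (g u)) →
      ¬ Prec j x (fun i => G.cost i (G.fullPlay v₀
        (Function.update σ j (QRGame.devStrat G v₀ g h)) [v₀])) := by
    intro g hg hPrec
    refine hsec ⟨j, QRGame.devStrat G v₀ g h,
      QRGame.devStrat_isStrat G v₀ g h hg hhist j, ?_⟩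
    rw [hxfun]
    exact hPrec
  -- the deviation play associated with a memoryless strategy `g` of `j`
  have core : ∀ g : V → V, (∀ u, G.E u (g u)) →
      ∃ π : ℕ → V,
        (¬ Prec j x (fun i => G.cost i π)) ∧
        (∀ t, t < h.length → π t = h.reverse.getD t v₀) ∧
        (π (h.length - 1) = QRGame.cur v₀ h) ∧
        (∀ t, G.E (π t) (π (t + 1))) ∧
        (∀ s, G.owner (π (h.length - 1 + s)) = j →
          π (h.length - 1 + s + 1) = g (π (h.length - 1 + s))) := by
    intro g hg
    obtain ⟨hpre, hedge, hfol⟩ :=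
      QRGame.deviation_play G v₀ σ hprof j h hhist hcons g hg
    refine ⟨G.fullPlay v₀ (Function.update σ j (QRGame.devStrat G v₀ g h)) [v₀],
      sec' g hg, hpre, ?_, hedge, hfol⟩
    rw [hpre (h.length - 1) (by omega),
      QRGame.getD_reverse h v₀ _ (by omega),
      show h.length - 1 - (h.length - 1) = 0 by omega,
      QRGame.getD_zero_eq_headD]
    rfl
  -- translating history costs through the deviation play
  have hdπ : ∀ (π : ℕ → V), (∀ t, t < h.length → π t = h.reverse.getD t v₀) →
      ∀ i, G.histCost v₀ i h = natInf {l | l < h.length ∧ π l ∈ G.F i} := by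
    intro π hpre i
    rw [QRGame.histCost_def]
    refine natInf_congr (Set.ext fun l => ?_)
    constructor
    · rintro ⟨hl, hm⟩
      exact ⟨hl, by rw [hpre l hl]; exact hm⟩
    · rintro ⟨hl, hm⟩
      exact ⟨hl, by rw [← hpre l hl]; exact hm⟩
  -- lower bound for the cost of a play
  have ylb : ∀ (π : ℕ → V) (i : Fin n) (c : ℕ∞),
      (∀ l, l < h.length → π l ∈ G.F i → c ≤ (l : ℕ∞)) →
      (∀ l, h.length ≤ l → π l ∈ G.F i → c ≤ (l : ℕ∞)) → c ≤ G.cost i π := by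
    intro π i c h1 h2
    rw [QRGame.cost_def]
    refine le_natInf fun l hl => ?_
    rcases lt_or_ge l h.length with hlt | hge
    · exact h1 l hlt hl
    · exact h2 l hge hl
  have ytop : ∀ (π : ℕ → V) (i : Fin n),
      (∀ l, l < h.length → π l ∉ G.F i) →
      (∀ l, h.length ≤ l → π l ∉ G.F i) → G.cost i π = ⊤ := by
    intro π i h1 h2
    rw [QRGame.cost_def]
    refine natInf_eq_top fun l hl => ?_
    rcases lt_or_ge l h.length with hlt | hge
    · exact h1 l hlt hl
    · exact h2 l hge hl
  have yub : ∀ (π : ℕ → V) (i : Fin n) (t : ℕ), π t ∈ G.F i →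
      G.cost i π ≤ (t : ℕ∞) := by
    intro π i t ht
    rw [QRGame.cost_def]
    exact natInf_le ht
  -- history cost is `⊤` for late players whose cost is above it
  have hdtop : ∀ i : Fin n, k ≤ (i : ℕ) → x i ≤ G.histCost v₀ i h →
      G.histCost v₀ i h = ⊤ := by
    intro i hik hxd
    by_contra hne
    obtain ⟨n₀, hn₀, he⟩ := natInf_attained (by rw [← QRGame.histCost_def]; exact hne)
    rw [← QRGame.histCost_def] at he
    have h1 : ((h.length : ℕ) : ℕ∞) ≤ (n₀ : ℕ∞) :=
      le_trans (hxbig i hik) (hxd.trans he.symm.le)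
    have h2 : (n₀ : ℕ) < h.length := hn₀.1
    exact absurd (Nat.cast_le.1 h1) (by omega)
  -- costs of the outcome prefix
  have hc_lt : ∀ i : Fin n, (i : ℕ) < k →
      G.costLT i (G.outcome v₀ σ) h.length = x i := by
    intro i hik
    have hxle : x i ≤ ((h.length - 1 : ℕ) : ℕ∞) := hk i hik
    have hxcost : natInf {l | G.outcome v₀ σ l ∈ G.F i} = x i := (hx i).symm
    have hne : natInf {l | G.outcome v₀ σ l ∈ G.F i} ≠ ⊤ := by
      rw [hxcost]
      intro hc
      rw [hc] at hxle
      simp at hxle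
    obtain ⟨n₀, hn₀, he⟩ := natInf_attained hne
    rw [hxcost] at he
    have hn₀len : n₀ < h.length := by
      have h1 : (n₀ : ℕ∞) ≤ ((h.length - 1 : ℕ) : ℕ∞) := he ▸ hxle
      have := Nat.cast_le.1 h1
      omega
    rw [QRGame.costLT_def]
    refine le_antisymm ?_ ?_
    · rw [← he]
      exact natInf_le ⟨hn₀len, hn₀⟩
    · rw [← hxcost]
      exact natInf_anti fun l hl => hl.2
  have hc_ge : ∀ i : Fin n, k ≤ (i : ℕ) →
      G.costLT i (G.outcome v₀ σ) h.length = ⊤ := by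
    intro i hik
    rw [QRGame.costLT_def]
    refine natInf_eq_top fun l hl => ?_
    have h1 : x i ≤ (l : ℕ∞) := by
      rw [hx i, QRGame.cost_def]
      exact natInf_le hl.2
    have h2 : (l : ℕ∞) < ((h.length : ℕ) : ℕ∞) := Nat.cast_lt.2 hl.1
    exact absurd (h1.trans_lt (h2.trans_le (hxbig i hik))) (lt_irrefl _)
  -- Branches 2 and 4: pure safety for the coalition
  have branch24 : ((h.length - 1 + (Fintype.card V - 1) : ℕ) : ℕ∞) < x j →
      G.CoalitionWinsML j Set.univ (G.F j)ᶜ (QRGame.cur v₀ h) := by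
    intro hxj
    by_cases hW : QRGame.cur v₀ h ∈ Wset G.E J Set.univ (G.F j)ᶜ
    · exact coal_win G.total hW
    · exfalso
      obtain ⟨g, hg⟩ := exists_j_strategy (E := G.E) (J := J) (R := Set.univ)
        (S := (G.F j)ᶜ) G.total
      have hgE : ∀ u, G.E u (g u) := fun u => (hg u).1
      obtain ⟨π, hnoPrec, hpre, hcur0, hedge, hfol⟩ := core g hgE
      set ψ : ℕ → V := fun s => π (h.length - 1 + s) with hψdef
      have hψ0 : ψ 0 = QRGame.cur v₀ h := by rw [hψdef]; simpa using hcur0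
      have hψedge : ∀ s, G.E (ψ s) (ψ (s + 1)) := by
        intro s
        show G.E (π (h.length - 1 + s)) (π (h.length - 1 + (s + 1)))
        rw [← Nat.add_assoc]
        exact hedge _
      have hψfol : ∀ s, J (ψ s) → ψ (s + 1) = g (ψ s) := by
        intro s hs
        show π (h.length - 1 + (s + 1)) = g (π (h.length - 1 + s))
        rw [← Nat.add_assoc]
        exact hfol s hs
      have hnS : ψ 0 ∈ Bset G.E J (G.F j)ᶜ (Fintype.card V - 1) := by
        have h1 : QRGame.cur v₀ h ∉ SafeSet G.E J (G.F j)ᶜ := by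
          intro hSafe
          exact hW (Set.mem_iUnion.2 ⟨0, ⟨Set.mem_univ _, hSafe⟩⟩)
        have h2 : QRGame.cur v₀ h ∈ ⋃ m, Bset G.E J (G.F j)ᶜ m := not_not.1 h1
        rw [Bset_union_eq' (by simpa using G.F_ne j)] at h2
        rwa [hψ0]
      obtain ⟨s, hs, hsF⟩ := j_reach (R := Set.univ) hg (Fintype.card V - 1)
        ψ hψedge hψfol hnS
      have hsF' : π (h.length - 1 + s) ∈ G.F j := by
        have h3 : ψ s ∈ G.F j := not_not.1 (by simpa using hsF)
        rwa [hψdef] at h3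
      have hyle : G.cost j π ≤ ((h.length - 1 + s : ℕ) : ℕ∞) :=
        yub π j _ hsF'
      refine hnoPrec (Or.inl (lt_of_le_of_lt hyle (lt_of_le_of_lt ?_ hxj)))
      exact_mod_cast (by omega : h.length - 1 + s ≤ h.length - 1 + (Fintype.card V - 1))
  refine ⟨?_, ?_, ?_, ?_⟩
  · -- Branch 1 : j < k
    intro hjk
    by_cases hW : QRGame.cur v₀ h ∈
        Wset G.E J (⋃ i ∈ {i : Fin n | k ≤ (i : ℕ)}, G.F i) Set.univ
    · exact coal_win G.total hW
    · exfalso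
      obtain ⟨g, hg⟩ := exists_j_strategy (E := G.E) (J := J)
        (R := ⋃ i ∈ {i : Fin n | k ≤ (i : ℕ)}, G.F i) (S := Set.univ) G.total
      have hgE : ∀ u, G.E u (g u) := fun u => (hg u).1
      obtain ⟨π, hnoPrec, hpre, hcur0, hedge, hfol⟩ := core g hgE
      set ψ : ℕ → V := fun s => π (h.length - 1 + s) with hψdef
      have hψ0 : ψ 0 = QRGame.cur v₀ h := by rw [hψdef]; simpa using hcur0
      have hψedge : ∀ s, G.E (ψ s) (ψ (s + 1)) := by
        intro s
        show G.E (π (h.length - 1 + s)) (π (h.length - 1 + (s + 1)))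
        rw [← Nat.add_assoc]
        exact hedge _
      have hψfol : ∀ s, J (ψ s) → ψ (s + 1) = g (ψ s) := by
        intro s hs
        show π (h.length - 1 + (s + 1)) = g (π (h.length - 1 + s))
        rw [← Nat.add_assoc]
        exact hfol s hs
      have hR : ∀ s, ψ s ∉ ⋃ i ∈ {i : Fin n | k ≤ (i : ℕ)}, G.F i := by
        rcases j_win hg ψ hψedge hψfol (hψ0 ▸ hW) with hS | hR
        · obtain ⟨t, ht⟩ := hS
          exact absurd (Set.mem_univ _) ht
        · exact hR
      have hpost : ∀ l, h.length ≤ l → ∀ i : Fin n, k ≤ (i : ℕ) → π l ∉ G.F i := by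
        intro l hl i hik hmem
        have hψl : π l = ψ (l - (h.length - 1)) := by
          rw [hψdef]
          congr 1
          omega
        rw [hψl] at hmem
        exact hR _ (Set.mem_iUnion₂.2 ⟨i, hik, hmem⟩)
      obtain ⟨hdj, hxd⟩ := hfacts1 hjk
      have hd : ∀ i, G.histCost v₀ i h = natInf {l | l < h.length ∧ π l ∈ G.F i} :=
        hdπ π hpre
      have hprefix_ge : ∀ (i : Fin n) l, l < h.length → π l ∈ G.F i →
          G.histCost v₀ i h ≤ (l : ℕ∞) := by
        intro i l hl hm
        rw [hd i]
        exact natInf_le ⟨hl, hm⟩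
      have hxy : ∀ i, x i ≤ G.cost i π := by
        intro i
        refine ylb π i (x i) (fun l hl hm => (hxd i).trans (hprefix_ge i l hl hm)) ?_
        intro l hl hm
        rcases lt_or_ge (i : ℕ) k with hik | hik
        · refine le_trans (hk i hik) ?_
          exact_mod_cast (by omega : h.length - 1 ≤ l)
        · exact absurd hm (hpost l hl i hik)
      have hxjne : x j ≠ ⊤ := by
        intro hc
        have h1 := hk j hjk
        rw [hc] at h1
        simp at h1
      have hyj : x j = G.cost j π := by
        refine le_antisymm (hxy j) ?_
        obtain ⟨n₀, hn₀, he⟩ := natInf_attained (A := {l | l < h.length ∧ π l ∈ G.F j})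
          (by rw [← hd j, hdj]; exact hxjne)
        rw [← hd j, hdj] at he
        rw [← he]
        exact yub π j n₀ hn₀.2
      have hstrict : ∃ i, x i < G.cost i π := by
        by_cases hP : ∃ i : Fin n, k ≤ (i : ℕ) ∧ x i ≠ ⊤
        · obtain ⟨i₁, hik₁, hxne₁⟩ := hP
          refine ⟨i₁, ?_⟩
          have htop : G.cost i₁ π = ⊤ := by
            refine ytop π i₁ (fun l hl hm => ?_) (fun l hl hm => hpost l hl i₁ hik₁ hm)
            have h1 := hprefix_ge i₁ l hl hm
            rw [hdtop i₁ hik₁ (hxd i₁)] at h1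
            simp at h1
          rw [htop]
          exact lt_top_iff_ne_top.2 hxne₁
        · obtain ⟨-, i₀, hi₀⟩ := hfacts3 hP
          push_neg at hP
          have hik₀ : (i₀ : ℕ) < k := by
            by_contra hge
            push_neg at hge
            rw [hP i₀ hge] at hi₀
            exact absurd hi₀ (by simp)
          have hxle₀ : x i₀ ≤ ((h.length - 1 : ℕ) : ℕ∞) := hk i₀ hik₀
          refine ⟨i₀, ?_⟩
          rw [QRGame.cost_def]
          refine lt_natInf (fun hc => by rw [hc] at hxle₀; simp at hxle₀) ?_
          intro m hm
          rcases lt_or_ge m h.length with hlt | hge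
          · exact hi₀.trans_le (hprefix_ge i₀ m hlt hm)
          · refine lt_of_le_of_lt hxle₀ ?_
            exact_mod_cast (by omega : h.length - 1 < m)
      exact hnoPrec (Or.inr ⟨hyj, hxy, hstrict⟩)
  · -- Branch 2 : k ≤ j < l
    intro hkj hjl
    refine branch24 (lt_of_lt_of_le ?_ (hk' j hkj))
    exact_mod_cast (by omega : h.length - 1 + (Fintype.card V - 1) <
      h.length - 1 + Fintype.card V)
  · -- Branch 3 : l ≤ j and the prefix of the outcome is ⪯_j the history
    intro hjl hpe
    have hkj : k ≤ (j : ℕ) := hkl.trans hjl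
    have hxj : x j = ⊤ := hl' j hjl
    have hdj : G.histCost v₀ j h = ⊤ := hfacts2 hkj
    have hcj : G.costLT j (G.outcome v₀ σ) h.length = ⊤ := hc_ge j hkj
    have hcd : ∀ i, G.costLT i (G.outcome v₀ σ) h.length ≤ G.histCost v₀ i h := by
      rcases hpe with hp | he
      · rcases hp with hlt | ⟨-, hle, -⟩
        · exfalso
          have hlt' : G.histCost v₀ j h < G.costLT j (G.outcome v₀ σ) h.length := hlt
          rw [hdj, hcj] at hlt'
          exact lt_irrefl _ hlt'
        · exact hle
      · intro i
        exact le_of_eq (congrFun he i)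
    have hdtop' : ∀ i : Fin n, k ≤ (i : ℕ) → G.histCost v₀ i h = ⊤ := by
      intro i hik
      have h1 := hcd i
      rw [hc_ge i hik] at h1
      exact top_le_iff.1 h1
    by_cases hW : QRGame.cur v₀ h ∈
        Wset G.E J (⋃ i ∈ {i : Fin n | k ≤ (i : ℕ) ∧ i ≠ j}, G.F i) (G.F j)ᶜ
    · exact coal_win G.total hW
    · exfalso
      obtain ⟨g, hg⟩ := exists_j_strategy (E := G.E) (J := J)
        (R := ⋃ i ∈ {i : Fin n | k ≤ (i : ℕ) ∧ i ≠ j}, G.F i) (S := (G.F j)ᶜ) G.total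
      have hgE : ∀ u, G.E u (g u) := fun u => (hg u).1
      obtain ⟨π, hnoPrec, hpre, hcur0, hedge, hfol⟩ := core g hgE
      set ψ : ℕ → V := fun s => π (h.length - 1 + s) with hψdef
      have hψ0 : ψ 0 = QRGame.cur v₀ h := by rw [hψdef]; simpa using hcur0
      have hψedge : ∀ s, G.E (ψ s) (ψ (s + 1)) := by
        intro s
        show G.E (π (h.length - 1 + s)) (π (h.length - 1 + (s + 1)))
        rw [← Nat.add_assoc]
        exact hedge _
      have hψfol : ∀ s, J (ψ s) → ψ (s + 1) = g (ψ s) := by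
        intro s hs
        show π (h.length - 1 + (s + 1)) = g (π (h.length - 1 + s))
        rw [← Nat.add_assoc]
        exact hfol s hs
      have hd : ∀ i, G.histCost v₀ i h = natInf {l | l < h.length ∧ π l ∈ G.F i} :=
        hdπ π hpre
      have hprefix_ge : ∀ (i : Fin n) lp, lp < h.length → π lp ∈ G.F i →
          G.histCost v₀ i h ≤ (lp : ℕ∞) := by
        intro i lp hl hm
        rw [hd i]
        exact natInf_le ⟨hl, hm⟩
      by_cases hFj : ∃ s, ψ s ∈ G.F j
      · obtain ⟨s, hs⟩ := hFj
        have hs' : π (h.length - 1 + s) ∈ G.F j := by rwa [hψdef] at hs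
        refine hnoPrec (Or.inl (lt_of_le_of_lt (yub π j _ hs') ?_))
        rw [hxj]
        exact lt_top_iff_ne_top.2 (ENat.coe_ne_top _)
      · push_neg at hFj
        have hRav : ∀ s, ψ s ∉ ⋃ i ∈ {i : Fin n | k ≤ (i : ℕ) ∧ i ≠ j}, G.F i := by
          rcases j_win hg ψ hψedge hψfol (hψ0 ▸ hW) with hS | hRav
          · obtain ⟨t, ht⟩ := hS
            exact absurd (not_not.1 (by simpa using ht)) (hFj t)
          · exact hRav
        have hpost : ∀ lp, h.length ≤ lp → ∀ i : Fin n, k ≤ (i : ℕ) → i ≠ j →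
            π lp ∉ G.F i := by
          intro lp hl i hik hij hmem
          have hψl : π lp = ψ (lp - (h.length - 1)) := by
            rw [hψdef]
            congr 1
            omega
          rw [hψl] at hmem
          exact hRav _ (Set.mem_iUnion₂.2 ⟨i, ⟨hik, hij⟩, hmem⟩)
        have hpostj : ∀ lp, h.length ≤ lp → π lp ∉ G.F j := by
          intro lp hl hmem
          have hψl : π lp = ψ (lp - (h.length - 1)) := by
            rw [hψdef]
            congr 1
            omega
          rw [hψl] at hmem
          exact hFj _ hmem
        have hprefj : ∀ lp, lp < h.length → π lp ∉ G.F j := by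
          intro lp hl hm
          have h1 := hprefix_ge j lp hl hm
          rw [hdj] at h1
          simp at h1
        have hyj : G.cost j π = ⊤ := ytop π j hprefj hpostj
        have hxy : ∀ i, x i ≤ G.cost i π := by
          intro i
          refine ylb π i (x i) ?_ ?_
          · intro lp hl hm
            rcases lt_or_ge (i : ℕ) k with hik | hik
            · calc x i = G.costLT i (G.outcome v₀ σ) h.length := (hc_lt i hik).symm
                _ ≤ G.histCost v₀ i h := hcd i
                _ ≤ (lp : ℕ∞) := hprefix_ge i lp hl hm
            · exfalso
              have h1 := hprefix_ge i lp hl hm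
              rw [hdtop' i hik] at h1
              simp at h1
          · intro lp hl hm
            rcases lt_or_ge (i : ℕ) k with hik | hik
            · refine le_trans (hk i hik) ?_
              exact_mod_cast (by omega : h.length - 1 ≤ lp)
            · by_cases hij : i = j
              · subst hij
                exact absurd hm (hpostj lp hl)
              · exact absurd hm (hpost lp hl i hik hij)
        have hstrict : ∃ i, x i < G.cost i π := by
          by_cases hkl2 : k < l
          · set i₁ : Fin n := ⟨k, lt_of_lt_of_le hkl2 hln⟩ with hi₁def
            have hik₁ : k ≤ (i₁ : ℕ) := le_refl k
            have hij₁ : i₁ ≠ j := by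
              intro hc
              have h2 := congrArg Fin.val hc
              simp only [hi₁def] at h2
              omega
            refine ⟨i₁, ?_⟩
            have htop : G.cost i₁ π = ⊤ := by
              refine ytop π i₁ (fun lp hl hm => ?_)
                (fun lp hl hm => hpost lp hl i₁ hik₁ hij₁ hm)
              have h1 := hprefix_ge i₁ lp hl hm
              rw [hdtop' i₁ hik₁] at h1
              simp at h1
            rw [htop]
            exact lt_top_iff_ne_top.2 (hl i₁ hkl2)
          · have hP : ¬ ∃ i : Fin n, k ≤ (i : ℕ) ∧ x i ≠ ⊤ := by
              rintro ⟨i, hik, hxne⟩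
              exact hxne (hl' i (by omega))
            obtain ⟨-, i₀, hi₀⟩ := hfacts3 hP
            have hik₀ : (i₀ : ℕ) < k := by
              by_contra hge
              push_neg at hge
              rw [hl' i₀ (by omega)] at hi₀
              exact absurd hi₀ (by simp)
            have hxle₀ : x i₀ ≤ ((h.length - 1 : ℕ) : ℕ∞) := hk i₀ hik₀
            refine ⟨i₀, ?_⟩
            rw [QRGame.cost_def]
            refine lt_natInf (fun hc => by rw [hc] at hxle₀; simp at hxle₀) ?_
            intro m hm
            rcases lt_or_ge m h.length with hlt | hge
            · exact hi₀.trans_le (hprefix_ge i₀ m hlt hm)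
            · refine lt_of_le_of_lt hxle₀ ?_
              exact_mod_cast (by omega : h.length - 1 < m)
        exact hnoPrec (Or.inr ⟨hxj.trans hyj.symm, hxy, hstrict⟩)
  · -- Branch 4 : l ≤ j, no PrecEq
    intro hjl _
    refine branch24 ?_
    rw [hl' j hjl]
    exact lt_top_iff_ne_top.2 (ENat.coe_ne_top _)
end

section
/- Let (σ_i)_{i∈Π} be a secure equilibrium in a multiplayer quantitative reachability game (G, v₀), with outcome ρ. Then there exists a dev-optimal secure equilibrium (τ_i)_{i∈Π} in (G, v₀) with the same outcome ρ. -/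
open scoped Classical ENat

namespace QRGame

variable {ι V : Type} [Fintype V]

/-- A strategy profile with outcome `ρ` is goal-optimal (with bound `Γ`) if
every goal set visited by `ρ` is visited before depth `Γ`. -/
noncomputable def GoalOpt (G : QRGame ι V) (v₀ : V) (σ : ι → List V → V) (Γ : ℕ) : Prop :=
  ∀ i, G.cost i (G.outcome v₀ σ) ≠ ⊤ → G.cost i (G.outcome v₀ σ) < (Γ : ℕ∞)

/-- The bound `D = max{Cost_i(ρ) : Cost_i(ρ) < +∞} + |V|` attached to a play `ρ`. -/
noncomputable def devBound (G : QRGame ι V) (ρ : ℕ → V) : ℕ :=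
  (⨆ i ∈ {i : ι | G.cost i ρ ≠ ⊤}, G.cost i ρ).toNat + Fintype.card V

variable [DecidableEq ι]

/-- A secure equilibrium with outcome `ρ` is dev-optimal if for every player
`j` and deviation `σ'_j` (with resulting play `ρ'`), the cost profile of the
prefix `ρ_{<D}` is not `≺_j` the cost profile of the prefix `ρ'_{<D}`, where
`D = max{Cost_i(ρ) : Cost_i(ρ) < +∞} + |V|`. -/
noncomputable def DevOpt (G : QRGame ι V) (v₀ : V) (σ : ι → List V → V) : Prop :=
  ∀ (j : ι) (σ' : List V → V), G.IsStrat v₀ j σ' →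
    ¬ Prec j
        (fun i => G.costLT i (G.outcome v₀ σ) (G.devBound (G.outcome v₀ σ)))
        (fun i => G.costLT i (G.outcome v₀ (Function.update σ j σ'))
          (G.devBound (G.outcome v₀ σ)))

end QRGame

/-! ### Auxiliary development for the proof -/

namespace QRGame

section CostAPI

variable {ι V : Type} (G : QRGame ι V)

lemma cost_le_of_mem {ρ : ℕ → V} {i : ι} {l : ℕ} (h : ρ l ∈ G.F i) :
    G.cost i ρ ≤ (l : ℕ∞) := by
  exact iInf₂_le l h

lemma le_cost {ρ : ℕ → V} {i : ι} {n : ℕ} (h : ∀ l, l < n → ρ l ∉ G.F i) :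
    (n : ℕ∞) ≤ G.cost i ρ := by
  refine le_iInf₂ fun l hl => ?_
  by_contra hlt
  push_neg at hlt
  exact h l (by exact_mod_cast hlt) hl

lemma cost_eq_top {ρ : ℕ → V} {i : ι} (h : ∀ l, ρ l ∉ G.F i) :
    G.cost i ρ = ⊤ := by
  rw [eq_top_iff]
  refine le_iInf₂ fun l hl => absurd hl (h l)

lemma cost_ne_top_iff {ρ : ℕ → V} {i : ι} :
    G.cost i ρ ≠ ⊤ ↔ ∃ l, ρ l ∈ G.F i := by
  constructor
  · intro h
    by_contra hn
    push_neg at hn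
    exact h (G.cost_eq_top hn)
  · rintro ⟨l, hl⟩ h
    have := G.cost_le_of_mem hl
    rw [h] at this
    exact (ENat.coe_lt_top l).not_ge (le_of_eq (top_le_iff.mp this).symm)

/-- If the cost is finite, it is attained as a first visit. -/
lemma cost_spec {ρ : ℕ → V} {i : ι} (h : G.cost i ρ ≠ ⊤) :
    ∃ c : ℕ, G.cost i ρ = c ∧ ρ c ∈ G.F i ∧ ∀ l, l < c → ρ l ∉ G.F i := by
  have hex : ∃ l, ρ l ∈ G.F i := (G.cost_ne_top_iff).mp h
  refine ⟨Nat.find hex, ?_, Nat.find_spec hex, fun l hl => Nat.find_min hex hl⟩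
  refine le_antisymm (G.cost_le_of_mem (Nat.find_spec hex)) ?_
  exact G.le_cost fun l hl => Nat.find_min hex (by exact_mod_cast hl)

lemma costLT_le_of_mem {ρ : ℕ → V} {i : ι} {l m : ℕ} (h : ρ l ∈ G.F i) (hl : l < m) :
    G.costLT i ρ m ≤ (l : ℕ∞) := by
  exact iInf₂_le l ⟨hl, h⟩

lemma le_costLT {ρ : ℕ → V} {i : ι} {n m : ℕ} (h : ∀ l, l < n → l < m → ρ l ∉ G.F i) :
    (n : ℕ∞) ≤ G.costLT i ρ m := by
  refine le_iInf₂ fun l hl => ?_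
  by_contra hlt
  push_neg at hlt
  exact h l (by exact_mod_cast hlt) hl.1 hl.2

lemma costLT_eq_top {ρ : ℕ → V} {i : ι} {m : ℕ} (h : ∀ l, l < m → ρ l ∉ G.F i) :
    G.costLT i ρ m = ⊤ := by
  rw [eq_top_iff]
  exact le_iInf₂ fun l hl => absurd hl.2 (h l hl.1)

lemma costLT_ne_top_iff {ρ : ℕ → V} {i : ι} {m : ℕ} :
    G.costLT i ρ m ≠ ⊤ ↔ ∃ l, l < m ∧ ρ l ∈ G.F i := by
  constructor
  · intro h
    by_contra hn
    push_neg at hn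
    exact h (G.costLT_eq_top hn)
  · rintro ⟨l, hl, hm⟩ h
    have := G.costLT_le_of_mem hm hl
    rw [h] at this
    exact (ENat.coe_lt_top l).not_ge (le_of_eq (top_le_iff.mp this).symm)

lemma costLT_spec {ρ : ℕ → V} {i : ι} {m : ℕ} (h : G.costLT i ρ m ≠ ⊤) :
    ∃ c : ℕ, G.costLT i ρ m = c ∧ c < m ∧ ρ c ∈ G.F i ∧ ∀ l, l < c → ρ l ∉ G.F i := by
  have hex : ∃ l, l < m ∧ ρ l ∈ G.F i := (G.costLT_ne_top_iff).mp h
  have hex' : ∃ l, ρ l ∈ G.F i ∧ l < m := by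
    obtain ⟨l, h1, h2⟩ := hex; exact ⟨l, h2, h1⟩
  set c := Nat.find hex' with hc
  have hspec := Nat.find_spec hex'
  refine ⟨c, ?_, hspec.2, hspec.1, fun l hl hmem => ?_⟩
  · refine le_antisymm (G.costLT_le_of_mem hspec.1 hspec.2) ?_
    refine G.le_costLT fun l hl hlm hmem => Nat.find_min hex' hl ⟨hmem, hlm⟩
  · exact Nat.find_min hex' hl ⟨hmem, lt_trans hl hspec.2⟩

lemma cost_le_costLT {ρ : ℕ → V} {i : ι} {m : ℕ} :
    G.cost i ρ ≤ G.costLT i ρ m := by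
  refine le_iInf₂ fun l hl => iInf₂_le l hl.2

end CostAPI

end QRGame
namespace QRGame

section RunAPI

variable {ι V : Type} (G : QRGame ι V) (v₀ : V)

/-- The history after `t` steps of the run of profile `P` from `v₀`. -/
def run (P : ι → List V → V) (t : ℕ) : List V := G.histFrom v₀ P [v₀] t

lemma run_zero (P : ι → List V → V) : G.run v₀ P 0 = [v₀] := rfl

lemma run_succ (P : ι → List V → V) (t : ℕ) :
    G.run v₀ P (t + 1) =
      P (G.owner (cur v₀ (G.run v₀ P t))) (G.run v₀ P t) :: G.run v₀ P t := rfl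

lemma length_run (P : ι → List V → V) (t : ℕ) : (G.run v₀ P t).length = t + 1 := by
  induction t with
  | zero => rfl
  | succ n ih => rw [run_succ]; simp [ih]

lemma run_ne_nil (P : ι → List V → V) (t : ℕ) : G.run v₀ P t ≠ [] := by
  intro h
  have := G.length_run v₀ P t
  rw [h] at this
  simp at this

lemma outcome_eq_cur (P : ι → List V → V) (t : ℕ) :
    G.outcome v₀ P t = cur v₀ (G.run v₀ P t) := by
  show (G.run v₀ P t).reverse.getD t v₀ = _
  rcases hl : G.run v₀ P t with _ | ⟨a, l⟩
  · exact absurd hl (G.run_ne_nil v₀ P t)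
  · have llen : l.length = t := by
      have := G.length_run v₀ P t
      rw [hl] at this
      simpa using this
    rw [List.reverse_cons, List.getD_append_right] <;> simp [llen, cur]

lemma run_succ' (P : ι → List V → V) (t : ℕ) :
    G.run v₀ P (t + 1) = G.outcome v₀ P (t + 1) :: G.run v₀ P t := by
  rw [run_succ]
  congr 1
  rw [outcome_eq_cur, run_succ]
  rfl

lemma outcome_zero (P : ι → List V → V) : G.outcome v₀ P 0 = v₀ := by
  rw [outcome_eq_cur, run_zero]; rfl

lemma run_suffix_of_le (P : ι → List V → V) {s t : ℕ} (h : s ≤ t) :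
    G.run v₀ P s <:+ G.run v₀ P t := by
  induction t with
  | zero => rw [Nat.le_zero.mp h]
  | succ n ih =>
    rcases Nat.lt_or_ge s (n+1) with hs | hs
    · rw [run_succ']
      exact (ih (by omega)).trans (List.suffix_cons _ _)
    · have : s = n + 1 := by omega
      rw [this]

/-- The element of the run list: `(run t).getD k = outcome (t - k)` for `k ≤ t`. -/
lemma run_getD (P : ι → List V → V) : ∀ t k : ℕ, k ≤ t →
    (G.run v₀ P t).getD k v₀ = G.outcome v₀ P (t - k) := by
  intro t
  induction t with
  | zero =>
    intro k hk
    have : k = 0 := by omega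
    subst this
    rw [run_zero, outcome_zero]; rfl
  | succ n ih =>
    intro k hk
    rw [run_succ']
    rcases k with _ | k'
    · simp
    · have h2 : n + 1 - (k' + 1) = n - k' := by omega
      rw [List.getD_cons_succ, h2, ih k' (by omega)]

lemma run_eq_of_suffix_eq {P Q : ι → List V → V} {s t u : ℕ}
    (hst : s ≤ t) (hsu : s ≤ u) (h : G.run v₀ P t = G.run v₀ Q u)
    (ht : t ≤ u) :
    G.run v₀ P s = G.run v₀ Q s := by
  have h1 : G.run v₀ P s <:+ G.run v₀ P t := G.run_suffix_of_le v₀ P hst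
  have h2 : G.run v₀ Q s <:+ G.run v₀ Q u := G.run_suffix_of_le v₀ Q hsu
  rw [h] at h1
  obtain ⟨l1, hl1⟩ := h1
  obtain ⟨l2, hl2⟩ := h2
  have hlen : l1.length = l2.length := by
    have e1 := congrArg List.length hl1
    have e2 := congrArg List.length hl2
    rw [List.length_append, G.length_run, G.length_run] at e1
    rw [List.length_append, G.length_run, G.length_run] at e2
    omega
  rw [← hl2] at hl1
  exact List.append_inj_right hl1 hlen

lemma outcome_congr_of_run_eq {P Q : ι → List V → V} {s t : ℕ}
    (hst : s ≤ t) (h : G.run v₀ P t = G.run v₀ Q t) :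
    G.outcome v₀ P s = G.outcome v₀ Q s := by
  rw [outcome_eq_cur, outcome_eq_cur, G.run_eq_of_suffix_eq v₀ hst hst h le_rfl]

lemma run_isHist {P : ι → List V → V} (hP : G.IsProfile v₀ P) (t : ℕ) :
    G.IsHist v₀ (G.run v₀ P t) := by
  induction t with
  | zero => rw [run_zero]; rfl
  | succ n ih =>
    rw [run_succ]
    rcases hl : G.run v₀ P n with _ | ⟨a, l⟩
    · exact absurd hl (G.run_ne_nil v₀ P n)
    · refine ⟨?_, ?_⟩
      · have hmv := hP (G.owner (cur v₀ (G.run v₀ P n))) (G.run v₀ P n) ih rfl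
        rw [hl] at hmv
        exact hmv
      · rw [hl] at ih; exact ih

lemma run_edge {P : ι → List V → V} (hP : G.IsProfile v₀ P) (t : ℕ) :
    G.E (G.outcome v₀ P t) (G.outcome v₀ P (t + 1)) := by
  rw [outcome_eq_cur, outcome_eq_cur, run_succ]
  have := hP (G.owner (cur v₀ (G.run v₀ P t))) (G.run v₀ P t) (G.run_isHist v₀ hP t) rfl
  simpa [cur] using this

/-- Generic congruence: two profiles whose moves agree along the run. -/
lemma run_congr {P Q : ι → List V → V} {n : ℕ}
    (h : ∀ t, t < n → G.run v₀ P t = G.run v₀ Q t →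
      P (G.owner (cur v₀ (G.run v₀ P t))) (G.run v₀ P t)
        = Q (G.owner (cur v₀ (G.run v₀ Q t))) (G.run v₀ Q t)) :
    G.run v₀ P n = G.run v₀ Q n := by
  induction n with
  | zero => rfl
  | succ m ih =>
    have hm : G.run v₀ P m = G.run v₀ Q m :=
      ih (fun t ht => h t (by omega))
    rw [run_succ, run_succ, h m (by omega) hm, hm]

end RunAPI

end QRGame
namespace QRGame

section Attractor

variable {ι V : Type} [Fintype V] (G : QRGame ι V)
variable (P : V → Prop) (C S : Set V)
set_option linter.unusedSectionVars false

/-- One step of the attractor construction for the coalition of `P`-controlled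
vertices, within the constraint set `C`, towards the target `S`. -/
def astep (X : Set V) : Set V :=
  X ∪ {v | v ∈ C ∧ ((P v ∧ ∃ w, G.E v w ∧ w ∈ X) ∨ (¬ P v ∧ ∀ w, G.E v w → w ∈ X))}

/-- Iterated attractor. -/
def attrN (n : ℕ) : Set V := (G.astep P C)^[n] (S ∩ C)

/-- The full attractor. -/
def attr : Set V := ⋃ n, G.attrN P C S n

lemma attrN_zero : G.attrN P C S 0 = S ∩ C := rfl

lemma attrN_succ (n : ℕ) :
    G.attrN P C S (n + 1) = G.astep P C (G.attrN P C S n) := by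
  unfold attrN
  rw [Function.iterate_succ_apply']

lemma attrN_mono_succ (n : ℕ) : G.attrN P C S n ⊆ G.attrN P C S (n + 1) := by
  rw [attrN_succ]
  exact Set.subset_union_left

lemma attrN_mono {m n : ℕ} (h : m ≤ n) : G.attrN P C S m ⊆ G.attrN P C S n := by
  induction n with
  | zero => have : m = 0 := by omega
            subst this; exact le_rfl
  | succ k ih =>
    rcases Nat.lt_or_ge m (k+1) with h1 | h1
    · exact (ih (by omega)).trans (G.attrN_mono_succ P C S k)
    · have : m = k + 1 := by omega
      subst this; exact le_rfl

lemma attrN_subset_C (n : ℕ) : G.attrN P C S n ⊆ C := by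
  induction n with
  | zero => exact Set.inter_subset_right
  | succ k ih =>
    rw [attrN_succ]
    rintro v (hv | hv)
    · exact ih hv
    · exact hv.1

lemma base_subset_attr : S ∩ C ⊆ G.attr P C S := by
  intro v hv
  exact Set.mem_iUnion.mpr ⟨0, hv⟩

lemma attr_subset_C : G.attr P C S ⊆ C := by
  rintro v hv
  obtain ⟨n, hn⟩ := Set.mem_iUnion.mp hv
  exact G.attrN_subset_C P C S n hn

lemma mem_attr_iff {v : V} : v ∈ G.attr P C S ↔ ∃ n, v ∈ G.attrN P C S n :=
  Set.mem_iUnion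

/-- Controlled-closure of the attractor. -/
lemma mem_attr_of_ctrl {v w : V} (hP : P v) (hC : v ∈ C) (hw : G.E v w)
    (hmem : w ∈ G.attr P C S) : v ∈ G.attr P C S := by
  obtain ⟨n, hn⟩ := (G.mem_attr_iff P C S).mp hmem
  refine (G.mem_attr_iff P C S).mpr ⟨n + 1, ?_⟩
  rw [attrN_succ]
  exact Or.inr ⟨hC, Or.inl ⟨hP, w, hw, hn⟩⟩

/-- Adversary-closure of the attractor. -/
lemma mem_attr_of_adv {v : V} (hP : ¬ P v) (hC : v ∈ C)
    (hall : ∀ w, G.E v w → w ∈ G.attr P C S) : v ∈ G.attr P C S := by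
  classical
  have hch : ∀ w : V, ∃ n, G.E v w → w ∈ G.attrN P C S n := by
    intro w
    by_cases he : G.E v w
    · obtain ⟨n, hn⟩ := (G.mem_attr_iff P C S).mp (hall w he)
      exact ⟨n, fun _ => hn⟩
    · exact ⟨0, fun h => absurd h he⟩
  choose f hf using hch
  set N := Finset.univ.sup f with hN
  refine (G.mem_attr_iff P C S).mpr ⟨N + 1, ?_⟩
  rw [attrN_succ]
  refine Or.inr ⟨hC, Or.inr ⟨hP, fun w hw => ?_⟩⟩
  exact G.attrN_mono P C S (Finset.le_sup (Finset.mem_univ w)) (hf w hw)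

/-- Once the iteration stabilizes it stays stable. -/
lemma attrN_stab {k : ℕ} (h : G.attrN P C S (k + 1) = G.attrN P C S k) :
    ∀ m, k ≤ m → G.attrN P C S m = G.attrN P C S k := by
  intro m hm
  induction m with
  | zero => have : k = 0 := by omega
            subst this; rfl
  | succ n ih =>
    rcases Nat.lt_or_ge k (n+1) with h1 | h1
    · have hn := ih (by omega)
      rw [attrN_succ, hn, ← attrN_succ, h]
    · have : k = n + 1 := by omega
      subst this; rfl

lemma ncard_attrN_le (n : ℕ) : (G.attrN P C S n).ncard ≤ Fintype.card V := by
  have := Set.ncard_le_ncard (Set.subset_univ (G.attrN P C S n)) (Set.finite_univ)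
  simpa [Set.ncard_univ] using this

/-- If the base is nonempty, the attractor is reached after `card V - 1` steps. -/
lemma attr_eq_attrN (hne : (S ∩ C).Nonempty) :
    G.attr P C S = G.attrN P C S (Fintype.card V - 1) := by
  classical
  have hV : 1 ≤ Fintype.card V := by
    have : Nonempty V := ⟨hne.choose⟩
    exact Fintype.card_pos
  -- there is a stabilization point ≤ card V - 1
  have hstab : ∃ k ≤ Fintype.card V - 1, G.attrN P C S (k+1) = G.attrN P C S k := by
    by_contra hcon
    push_neg at hcon
    have hgrow : ∀ k, k ≤ Fintype.card V - 1 → k + 1 ≤ (G.attrN P C S k).ncard := by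
      intro k
      induction k with
      | zero =>
        intro _
        have : (G.attrN P C S 0).Nonempty := by rwa [attrN_zero]
        simpa [Nat.one_le_iff_ne_zero, Set.ncard_eq_zero (Set.toFinite _)] using
          this.ne_empty
      | succ m ih =>
        intro hk
        have h1 : m + 1 ≤ (G.attrN P C S m).ncard := ih (by omega)
        have hss : G.attrN P C S m ⊂ G.attrN P C S (m+1) :=
          ssubset_of_subset_of_ne (G.attrN_mono_succ P C S m)
            (fun he => hcon m (by omega) he.symm)
        have := Set.ncard_lt_ncard hss (Set.toFinite _)
        omega
    have h1 := hgrow (Fintype.card V - 1) le_rfl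
    have hcc : Fintype.card V - 1 + 1 = Fintype.card V := by omega
    have hss : G.attrN P C S (Fintype.card V - 1) ⊂
        G.attrN P C S (Fintype.card V - 1 + 1) :=
      ssubset_of_subset_of_ne (G.attrN_mono_succ P C S _)
        (fun he => hcon (Fintype.card V - 1) le_rfl he.symm)
    have h2 := Set.ncard_lt_ncard hss (Set.toFinite _)
    have h3 := G.ncard_attrN_le P C S (Fintype.card V - 1 + 1)
    omega
  obtain ⟨k, hk, hkstab⟩ := hstab
  apply Set.Subset.antisymm
  · rintro v hv
    obtain ⟨n, hn⟩ := (G.mem_attr_iff P C S).mp hv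
    rcases Nat.lt_or_ge n k with h1 | h1
    · exact G.attrN_mono P C S (by omega) hn
    · have := (G.attrN_stab P C S hkstab n h1) ▸ hn
      exact G.attrN_mono P C S hk this
  · exact fun v hv => (G.mem_attr_iff P C S).mpr ⟨_, hv⟩

/-- Rank of a vertex in the attractor. -/
noncomputable def rkA (v : V) : ℕ :=
  if h : ∃ n, v ∈ G.attrN P C S n then Nat.find h else 0

/-- Positional attractor move. -/
noncomputable def amove (v : V) : V :=
  if h : ∃ w, G.E v w ∧ w ∈ G.attrN P C S (G.rkA P C S v - 1) then h.choose
  else (G.total v).choose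

lemma amove_edge (v : V) : G.E v (G.amove P C S v) := by
  unfold amove
  split
  · next h => exact h.choose_spec.1
  · exact (G.total v).choose_spec

lemma amove_spec {v : V} {n : ℕ} (hv : v ∈ G.attrN P C S (n+1))
    (hv' : v ∉ G.attrN P C S n) (hP : P v) :
    v ∉ S ∩ C → G.amove P C S v ∈ G.attrN P C S n := by
  intro _
  have hrk : G.rkA P C S v = n + 1 := by
    unfold rkA
    rw [dif_pos ⟨n+1, hv⟩]
    refine le_antisymm (Nat.find_le hv) ?_
    by_contra hlt
    push_neg at hlt
    have := Nat.find_spec (⟨n+1, hv⟩ : ∃ m, v ∈ G.attrN P C S m)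
    exact hv' (G.attrN_mono P C S (by omega) this)
  have hex : ∃ w, G.E v w ∧ w ∈ G.attrN P C S (G.rkA P C S v - 1) := by
    rw [hrk]
    simp only [Nat.add_sub_cancel]
    have h1 := hv
    rw [attrN_succ] at h1
    rcases h1 with h1 | h1
    · exact absurd h1 hv'
    · rcases h1.2 with ⟨_, hw⟩ | ⟨hnp, _⟩
      · exact hw
      · exact absurd hP hnp
  unfold amove
  rw [dif_pos hex]
  have h2 : G.attrN P C S (G.rkA P C S v - 1) = G.attrN P C S n := by
    rw [hrk]; simp
  exact h2 ▸ hex.choose_spec.2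

/-- The central reachability lemma: along any play where controlled vertices
inside the attractor follow `amove` and the rest follow edges, the target is
reached within `n` steps from `attrN n`. -/
lemma attr_reach (p : ℕ → V) :
    ∀ n t₀, p t₀ ∈ G.attrN P C S n →
    (∀ t, t₀ ≤ t → P (p t) → p t ∈ G.attr P C S → p t ∉ S ∩ C →
        p (t+1) = G.amove P C S (p t)) →
    (∀ t, t₀ ≤ t → G.E (p t) (p (t+1))) →
    ∃ k, k ≤ n ∧ p (t₀ + k) ∈ S ∩ C := by
  intro n
  induction n with
  | zero =>
    intro t₀ hmem _ _
    exact ⟨0, le_rfl, hmem⟩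
  | succ m ih =>
    intro t₀ hmem hmove hedge
    classical
    by_cases hbase : p t₀ ∈ S ∩ C
    · exact ⟨0, by omega, hbase⟩
    by_cases hm : p t₀ ∈ G.attrN P C S m
    · obtain ⟨k, hk, hk2⟩ := ih t₀ hm hmove hedge
      exact ⟨k, by omega, hk2⟩
    have hnext : p (t₀ + 1) ∈ G.attrN P C S m := by
      by_cases hP : P (p t₀)
      · have := hmove t₀ le_rfl hP ((G.mem_attr_iff P C S).mpr ⟨m+1, hmem⟩) hbase
        rw [this]
        exact G.amove_spec P C S hmem hm hP hbase
      · have h1 := hmem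
        rw [attrN_succ] at h1
        rcases h1 with h1 | h1
        · exact absurd h1 hm
        · rcases h1.2 with ⟨hp, _⟩ | ⟨_, hall⟩
          · exact absurd hp hP
          · exact hall _ (hedge t₀ le_rfl)
    obtain ⟨k, hk, hk2⟩ := ih (t₀ + 1) hnext
      (fun t ht => hmove t (by omega)) (fun t ht => hedge t (by omega))
    refine ⟨k + 1, by omega, ?_⟩
    have : t₀ + (k+1) = t₀ + 1 + k := by omega
    rw [this]
    exact hk2

end Attractor

end QRGame
namespace QRGame

section AttractorMore

set_option linter.unusedSectionVars false

variable {ι V : Type} [Fintype V] (G : QRGame ι V)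
variable (P : V → Prop) (C S : Set V)

lemma attrN_empty (h : S ∩ C = ∅) (n : ℕ) : G.attrN P C S n = ∅ := by
  induction n with
  | zero => exact h
  | succ m ih =>
    rw [attrN_succ, ih]
    unfold astep
    ext v
    constructor
    · rintro (h0 | ⟨hC, ⟨_, w, hw, hmem⟩ | ⟨_, hall⟩⟩)
      · exact h0
      · exact hmem
      · obtain ⟨w, hw⟩ := G.total v
        exact absurd (hall w hw) (Set.notMem_empty w)
    · intro h0
      exact absurd h0 (Set.notMem_empty v)

lemma attr_empty (h : S ∩ C = ∅) : G.attr P C S = ∅ := by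
  ext v
  simp only [mem_attr_iff, Set.mem_empty_iff_false, iff_false, not_exists]
  intro n hn
  rw [G.attrN_empty P C S h n] at hn
  exact hn

lemma amove_mem_C {v : V} (hv : v ∈ G.attr P C S) (hb : v ∉ S ∩ C) (hP : P v) :
    G.amove P C S v ∈ C := by
  classical
  have hex : ∃ n, v ∈ G.attrN P C S n := (G.mem_attr_iff P C S).mp hv
  set n := Nat.find hex with hn
  have hmem : v ∈ G.attrN P C S n := Nat.find_spec hex
  rcases n with _ | m
  · exact absurd hmem hb
  · have hm : v ∉ G.attrN P C S m := by
      intro hc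
      have := Nat.find_min' hex hc
      omega
    have := G.amove_spec P C S hmem hm hP hb
    exact G.attrN_subset_C P C S m this

end AttractorMore

end QRGame
namespace QRGame

section Construction

set_option linter.unusedSectionVars false

variable {ι V : Type} [Fintype ι] [Fintype V] [DecidableEq ι]
variable (G : QRGame ι V) (v₀ : V) (σ : ι → List V → V)

/-- The bound `M`: maximum of the finite costs of the outcome of `σ`. -/
noncomputable def MM : ℕ :=
  (⨆ i ∈ {i : ι | G.cost i (G.outcome v₀ σ) ≠ ⊤}, G.cost i (G.outcome v₀ σ)).toNat

lemma devBound_outcome_eq : G.devBound (G.outcome v₀ σ) = G.MM v₀ σ + Fintype.card V := rfl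

lemma cost_le_MM {i : ι} (h : G.cost i (G.outcome v₀ σ) ≠ ⊤) :
    G.cost i (G.outcome v₀ σ) ≤ (G.MM v₀ σ : ℕ∞) := by
  classical
  set Ssup := ⨆ i ∈ {i : ι | G.cost i (G.outcome v₀ σ) ≠ ⊤}, G.cost i (G.outcome v₀ σ)
    with hS
  have hle : G.cost i (G.outcome v₀ σ) ≤ Ssup := by
    rw [hS]
    exact le_iSup₂ (f := fun i (_ : i ∈ {i : ι | G.cost i (G.outcome v₀ σ) ≠ ⊤}) => G.cost i (G.outcome v₀ σ)) i h
  have hne : Ssup ≠ ⊤ := by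
    set N : ℕ := Finset.univ.sup (fun i => (G.cost i (G.outcome v₀ σ)).toNat) with hN
    have : Ssup ≤ (N : ℕ∞) := by
      rw [hS]
      refine iSup₂_le fun i hi => ?_
      have h1 : G.cost i (G.outcome v₀ σ) = ((G.cost i (G.outcome v₀ σ)).toNat : ℕ∞) :=
        (ENat.coe_toNat hi).symm
      rw [h1]
      exact_mod_cast Finset.le_sup (f := fun i => (G.cost i (G.outcome v₀ σ)).toNat) (Finset.mem_univ i)
    intro he
    rw [he, top_le_iff] at this
    exact ENat.coe_ne_top N this
  calc G.cost i (G.outcome v₀ σ) ≤ Ssup := hle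
    _ = ((Ssup.toNat : ℕ) : ℕ∞) := (ENat.coe_toNat hne).symm
    _ = (G.MM v₀ σ : ℕ∞) := rfl

/-- Goal vertices of players whose cost on the outcome of `σ` is infinite. -/
def FA : Set V := {v | ∃ i, G.cost i (G.outcome v₀ σ) = ⊤ ∧ v ∈ G.F i}

/-- Region from which the deviator `j` can force reaching his own goal set. -/
noncomputable def JA (j : ι) : Set V :=
  G.attr (fun v => G.owner v = j) Set.univ (G.F j)

/-- Constraint set: where the coalition confines the deviator (trivial when the
deviator's cost is finite). -/
noncomputable def WSx (j : ι) : Set V :=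
  if G.cost j (G.outcome v₀ σ) = ⊤ then (G.JA j)ᶜ else Set.univ

/-- Region from which the coalition can force visiting `FA` (while keeping the
deviator away from his goal, in case his cost is infinite). -/
noncomputable def WW (j : ι) : Set V :=
  G.attr (fun v => G.owner v ≠ j) (G.WSx v₀ σ j) (G.FA v₀ σ)

/-- An arbitrary valid move. -/
noncomputable def anyE (v : V) : V := (G.total v).choose

lemma anyE_edge (v : V) : G.E v (G.anyE v) := (G.total v).choose_spec

/-- A coalition move staying inside the constraint set, when possible. -/
noncomputable def wsmove (j : ι) (v : V) : V :=
  if h : ∃ w, G.E v w ∧ w ∈ G.WSx v₀ σ j then h.choose else G.anyE v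

lemma wsmove_edge (j : ι) (v : V) : G.E v (G.wsmove v₀ σ j v) := by
  unfold wsmove
  split
  · next h => exact h.choose_spec.1
  · exact G.anyE_edge v

lemma wsmove_mem {j : ι} {v : V} (h : ∃ w, G.E v w ∧ w ∈ G.WSx v₀ σ j) :
    G.wsmove v₀ σ j v ∈ G.WSx v₀ σ j := by
  unfold wsmove
  rw [dif_pos h]
  exact h.choose_spec.2

/-- The positional punishing strategy of the coalition against deviator `j`. -/
noncomputable def pim (j : ι) (v : V) : V :=
  if v ∈ G.WW v₀ σ j ∧ v ∉ G.FA v₀ σ ∩ G.WSx v₀ σ j then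
    G.amove (fun v => G.owner v ≠ j) (G.WSx v₀ σ j) (G.FA v₀ σ) v
  else G.wsmove v₀ σ j v

lemma pim_edge (j : ι) (v : V) : G.E v (G.pim v₀ σ j v) := by
  unfold pim
  split
  · exact G.amove_edge _ _ _ v
  · exact G.wsmove_edge v₀ σ j v

/-- Whether a history lies on the outcome of `σ`. -/
def onPath (h : List V) : Prop := h = G.run v₀ σ (h.length - 1)

/-- The divergence point of a history from the outcome of `σ`. -/
noncomputable def divg (h : List V) : ℕ :=
  Nat.findGreatest (fun s => G.run v₀ σ s <:+ h) (h.length - 1)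

/-- The deviator identified from an off-path history. -/
noncomputable def jhat (h : List V) : ι :=
  G.owner (G.outcome v₀ σ (G.divg v₀ σ h))

/-- The modified profile `τ`. -/
noncomputable def tau : ι → List V → V := fun i h =>
  if G.onPath v₀ σ h ∨ h.length ≤ G.MM v₀ σ then σ i h
  else if i = G.jhat v₀ σ h then G.anyE (cur v₀ h)
  else G.pim v₀ σ (G.jhat v₀ σ h) (cur v₀ h)

lemma tau_on {h : List V} (hon : G.onPath v₀ σ h ∨ h.length ≤ G.MM v₀ σ) (i : ι) :
    G.tau v₀ σ i h = σ i h := by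
  unfold tau
  rw [if_pos hon]

lemma tau_off {h : List V} (hoff : ¬ (G.onPath v₀ σ h ∨ h.length ≤ G.MM v₀ σ)) {i : ι}
    (hne : i ≠ G.jhat v₀ σ h) :
    G.tau v₀ σ i h = G.pim v₀ σ (G.jhat v₀ σ h) (cur v₀ h) := by
  unfold tau
  rw [if_neg hoff, if_neg hne]

lemma tau_isProfile (hprof : G.IsProfile v₀ σ) : G.IsProfile v₀ (G.tau v₀ σ) := by
  intro i h hh hown
  unfold tau
  split
  · exact hprof i h hh hown
  · split
    · exact G.anyE_edge _
    · exact G.pim_edge v₀ σ _ _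

lemma onPath_run (t : ℕ) : G.onPath v₀ σ (G.run v₀ σ t) := by
  unfold onPath
  rw [G.length_run v₀ σ t]
  simp

lemma tau_run_eq (t : ℕ) : G.run v₀ (G.tau v₀ σ) t = G.run v₀ σ t := by
  refine G.run_congr v₀ (fun s hs hrun => ?_)
  rw [hrun]
  unfold tau
  rw [if_pos (Or.inl (G.onPath_run v₀ σ s))]

lemma tau_outcome_eq : G.outcome v₀ (G.tau v₀ σ) = G.outcome v₀ σ := by
  funext t
  rw [G.outcome_eq_cur, G.outcome_eq_cur, G.tau_run_eq]

end Construction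

end QRGame
namespace QRGame

section ListHelper

lemma suffix_eq_of_length_eq {α : Type*} {l₁ l₂ L : List α}
    (h₁ : l₁ <:+ L) (h₂ : l₂ <:+ L) (h : l₁.length = l₂.length) : l₁ = l₂ := by
  obtain ⟨a, ha⟩ := h₁
  obtain ⟨b, hb⟩ := h₂
  rw [← hb] at ha
  have hlen : a.length = b.length := by
    have e1 := congrArg List.length ha
    rw [List.length_append, List.length_append] at e1
    omega
  exact List.append_inj_right ha hlen

end ListHelper

section Deviation

set_option linter.unusedSectionVars false

variable {ι V : Type} [Fintype ι] [Fintype V] [DecidableEq ι]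

lemma run_eq_iff (G : QRGame ι V) (v₀ : V) {P Q : ι → List V → V} {t : ℕ} :
    G.run v₀ P t = G.run v₀ Q t ↔ ∀ s, s ≤ t → G.outcome v₀ P s = G.outcome v₀ Q s := by
  constructor
  · intro h s hs
    exact G.outcome_congr_of_run_eq v₀ hs h
  · intro h
    induction t with
    | zero => rw [G.run_zero, G.run_zero]
    | succ n ih =>
      rw [G.run_succ', G.run_succ', h (n+1) le_rfl,
        ih (fun s hs => h s (by omega))]

lemma update_isProfile (G : QRGame ι V) (v₀ : V) (σ : ι → List V → V) (j : ι)
    (σ' : List V → V) (hprof : G.IsProfile v₀ σ) (hstrat : G.IsStrat v₀ j σ') :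
    G.IsProfile v₀ (Function.update (G.tau v₀ σ) j σ') := by
  intro i h hh hown
  by_cases hij : i = j
  · subst hij
    rw [Function.update_self]
    exact hstrat h hh hown
  · rw [Function.update_of_ne hij]
    exact G.tau_isProfile v₀ σ hprof i h hh hown

/-- Divergence data: `d` is the divergence point of the deviation play. -/
def DivData (G : QRGame ι V) (v₀ : V) (σ : ι → List V → V) (j : ι)
    (σ' : List V → V) (d : ℕ) : Prop :=
  (∀ s, s ≤ d → G.outcome v₀ (Function.update (G.tau v₀ σ) j σ') s = G.outcome v₀ σ s) ∧
    G.outcome v₀ (Function.update (G.tau v₀ σ) j σ') (d+1) ≠ G.outcome v₀ σ (d+1)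

variable {G : QRGame ι V} {v₀ : V} {σ : ι → List V → V} {j : ι} {σ' : List V → V} {d : ℕ}

lemma DivData.run_agree (hd : G.DivData v₀ σ j σ' d) {s : ℕ} (hs : s ≤ d) :
    G.run v₀ (Function.update (G.tau v₀ σ) j σ') s = G.run v₀ σ s :=
  (G.run_eq_iff v₀).mpr (fun u hu => hd.1 u (le_trans hu hs))

lemma DivData.owner_div (hd : G.DivData v₀ σ j σ' d) :
    G.owner (G.outcome v₀ σ d) = j := by
  by_contra hown
  apply hd.2
  have hrun := hd.run_agree (le_refl d)
  have hcurown : G.owner (cur v₀ (G.run v₀ (Function.update (G.tau v₀ σ) j σ') d)) ≠ j := by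
    rw [← G.outcome_eq_cur, hd.1 d le_rfl]
    exact hown
  have hstep : G.outcome v₀ (Function.update (G.tau v₀ σ) j σ') (d+1)
      = Function.update (G.tau v₀ σ) j σ'
          (G.owner (cur v₀ (G.run v₀ (Function.update (G.tau v₀ σ) j σ') d)))
          (G.run v₀ (Function.update (G.tau v₀ σ) j σ') d) := by
    rw [G.outcome_eq_cur, G.run_succ]
    rfl
  rw [hstep, Function.update_of_ne hcurown]
  rw [hrun]
  rw [G.tau_on v₀ σ (Or.inl (G.onPath_run v₀ σ d))]
  have : G.outcome v₀ σ (d+1) = σ (G.owner (cur v₀ (G.run v₀ σ d))) (G.run v₀ σ d) := by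
    rw [G.outcome_eq_cur, G.run_succ]
    rfl
  rw [this]

lemma DivData.not_onPath (hd : G.DivData v₀ σ j σ' d) {t : ℕ} (ht : d < t) :
    ¬ G.onPath v₀ σ (G.run v₀ (Function.update (G.tau v₀ σ) j σ') t) := by
  intro hop
  unfold onPath at hop
  rw [G.length_run] at hop
  simp only [Nat.add_sub_cancel] at hop
  exact hd.2 (G.outcome_congr_of_run_eq v₀ (by omega : d + 1 ≤ t) hop)

lemma DivData.divg_eq (hd : G.DivData v₀ σ j σ' d) {t : ℕ} (ht : d < t) :
    G.divg v₀ σ (G.run v₀ (Function.update (G.tau v₀ σ) j σ') t) = d := by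
  classical
  have hlen : (G.run v₀ (Function.update (G.tau v₀ σ) j σ') t).length - 1 = t := by
    rw [G.length_run]; omega
  have hPd : G.run v₀ σ d <:+ G.run v₀ (Function.update (G.tau v₀ σ) j σ') t := by
    rw [← hd.run_agree (le_refl d)]
    exact G.run_suffix_of_le v₀ _ (by omega)
  have hnP : ∀ s, d < s → s ≤ t →
      ¬ (G.run v₀ σ s <:+ G.run v₀ (Function.update (G.tau v₀ σ) j σ') t) := by
    intro s hs1 hs2 hsuf
    have h1 : G.run v₀ (Function.update (G.tau v₀ σ) j σ') s
        <:+ G.run v₀ (Function.update (G.tau v₀ σ) j σ') t :=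
      G.run_suffix_of_le v₀ _ hs2
    have := suffix_eq_of_length_eq h1 hsuf (by rw [G.length_run, G.length_run])
    exact hd.2 (G.outcome_congr_of_run_eq v₀ (by omega : d + 1 ≤ s) this)
  unfold divg
  rw [hlen]
  have hge : d ≤ Nat.findGreatest
      (fun s => G.run v₀ σ s <:+ G.run v₀ (Function.update (G.tau v₀ σ) j σ') t) t :=
    Nat.le_findGreatest
      (P := fun s => G.run v₀ σ s <:+ G.run v₀ (Function.update (G.tau v₀ σ) j σ') t)
      (by omega) hPd
  have hle : Nat.findGreatest
      (fun s => G.run v₀ σ s <:+ G.run v₀ (Function.update (G.tau v₀ σ) j σ') t) t ≤ d := by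
    by_contra hc
    push_neg at hc
    have hspec := Nat.findGreatest_spec
      (P := fun s => G.run v₀ σ s <:+ G.run v₀ (Function.update (G.tau v₀ σ) j σ') t)
      (m := d) (n := t) (show d ≤ t by omega) hPd
    exact hnP _ hc (Nat.findGreatest_le t) hspec
  omega

lemma DivData.jhat_eq (hd : G.DivData v₀ σ j σ' d) {t : ℕ} (ht : d < t) :
    G.jhat v₀ σ (G.run v₀ (Function.update (G.tau v₀ σ) j σ') t) = j := by
  unfold jhat
  rw [hd.divg_eq ht, hd.owner_div]

/-- Off-path, past time `M`, the coalition plays the punishing strategy. -/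
lemma DivData.coalition_pim (hd : G.DivData v₀ σ j σ' d) {t : ℕ} (ht : d < t)
    (htM : G.MM v₀ σ ≤ t)
    (hown : G.owner (G.outcome v₀ (Function.update (G.tau v₀ σ) j σ') t) ≠ j) :
    G.outcome v₀ (Function.update (G.tau v₀ σ) j σ') (t+1)
      = G.pim v₀ σ j (G.outcome v₀ (Function.update (G.tau v₀ σ) j σ') t) := by
  have hcurown : G.owner (cur v₀ (G.run v₀ (Function.update (G.tau v₀ σ) j σ') t)) ≠ j := by
    rw [← G.outcome_eq_cur]; exact hown
  have hstep : G.outcome v₀ (Function.update (G.tau v₀ σ) j σ') (t+1)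
      = Function.update (G.tau v₀ σ) j σ'
          (G.owner (cur v₀ (G.run v₀ (Function.update (G.tau v₀ σ) j σ') t)))
          (G.run v₀ (Function.update (G.tau v₀ σ) j σ') t) := by
    rw [G.outcome_eq_cur, G.run_succ]
    rfl
  rw [hstep, Function.update_of_ne hcurown]
  rw [G.tau_off v₀ σ ?_ ?_]
  · rw [hd.jhat_eq ht, ← G.outcome_eq_cur]
  · push_neg
    refine ⟨hd.not_onPath ht, ?_⟩
    rw [G.length_run]
    omega
  · rw [hd.jhat_eq ht, ← G.outcome_eq_cur]
    exact hown

/-- In the `σ`-mimicking phase the coalition follows `σ`. -/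
lemma DivData.coalition_sigma (hd : G.DivData v₀ σ j σ' d) {t : ℕ}
    (ht : t < G.MM v₀ σ ∨ t ≤ d)
    (hown : G.owner (G.outcome v₀ (Function.update (G.tau v₀ σ) j σ') t) ≠ j) :
    G.outcome v₀ (Function.update (G.tau v₀ σ) j σ') (t+1)
      = σ (G.owner (G.outcome v₀ (Function.update (G.tau v₀ σ) j σ') t))
          (G.run v₀ (Function.update (G.tau v₀ σ) j σ') t) := by
  have hcurown : G.owner (cur v₀ (G.run v₀ (Function.update (G.tau v₀ σ) j σ') t)) ≠ j := by
    rw [← G.outcome_eq_cur]; exact hown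
  have hstep : G.outcome v₀ (Function.update (G.tau v₀ σ) j σ') (t+1)
      = Function.update (G.tau v₀ σ) j σ'
          (G.owner (cur v₀ (G.run v₀ (Function.update (G.tau v₀ σ) j σ') t)))
          (G.run v₀ (Function.update (G.tau v₀ σ) j σ') t) := by
    rw [G.outcome_eq_cur, G.run_succ]
    rfl
  rw [hstep, Function.update_of_ne hcurown]
  rw [G.tau_on v₀ σ ?_, G.outcome_eq_cur v₀ (Function.update (G.tau v₀ σ) j σ') t]
  rcases ht with ht | ht
  · right
    rw [G.length_run]
    omega
  · left
    rw [hd.run_agree ht]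
    exact G.onPath_run v₀ σ t

end Deviation

end QRGame
namespace QRGame

section Mimic

set_option linter.unusedSectionVars false

variable {ι V : Type} [Fintype ι] [Fintype V] [DecidableEq ι]
variable (G : QRGame ι V) (v₀ : V)

/-- The strategy that replays the (reversed) history list `L` and afterwards
plays the positional strategy `ς`. -/
noncomputable def mimic (L : List V) (ς : V → V) : List V → V := fun h =>
  if 1 ≤ h.length ∧ h.length < L.length ∧ h <:+ L then L.getD (L.length - 1 - h.length) v₀
  else ς (cur v₀ h)

variable {P' : ι → List V → V} {t₀ : ℕ} {ς : V → V}

lemma mimic_long {L : List V} {h : List V}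
    (hnot : ¬ (1 ≤ h.length ∧ h.length < L.length ∧ h <:+ L)) :
    mimic v₀ L ς h = ς (cur v₀ h) := by
  unfold mimic
  rw [if_neg hnot]

lemma mimic_suffix_move (hP' : G.IsProfile v₀ P') {t : ℕ} (ht : t < t₀) :
    mimic v₀ (G.run v₀ P' t₀) ς (G.run v₀ P' t) = G.outcome v₀ P' (t + 1) := by
  unfold mimic
  rw [if_pos]
  · rw [G.length_run, G.length_run]
    have hk : t₀ + 1 - 1 - (t + 1) ≤ t₀ := by omega
    rw [G.run_getD v₀ P' t₀ (t₀ + 1 - 1 - (t + 1)) hk]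
    congr 1
    omega
  · refine ⟨by rw [G.length_run]; omega, by rw [G.length_run, G.length_run]; omega, ?_⟩
    exact G.run_suffix_of_le v₀ P' (by omega)

lemma mimic_edge (hP' : G.IsProfile v₀ P') (hς : ∀ v, G.E v (ς v)) (h : List V) :
    G.E (cur v₀ h) (mimic v₀ (G.run v₀ P' t₀) ς h) := by
  by_cases hc : 1 ≤ h.length ∧ h.length < (G.run v₀ P' t₀).length ∧ h <:+ G.run v₀ P' t₀
  · obtain ⟨h1, h2, h3⟩ := hc
    have hlen2 : h.length - 1 < t₀ := by
      rw [G.length_run] at h2; omega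
    have hh : h = G.run v₀ P' (h.length - 1) := by
      refine suffix_eq_of_length_eq h3 (G.run_suffix_of_le v₀ P' (by omega)) ?_
      rw [G.length_run]
      omega
    have hcur : cur v₀ h = G.outcome v₀ P' (h.length - 1) := by
      conv_lhs => rw [hh]
      rw [← G.outcome_eq_cur]
    have hmv : mimic v₀ (G.run v₀ P' t₀) ς h = G.outcome v₀ P' (h.length - 1 + 1) := by
      conv_lhs => rw [hh]
      exact G.mimic_suffix_move v₀ hP' hlen2
    rw [hcur, hmv]
    exact G.run_edge v₀ hP' (h.length - 1)
  · have : mimic v₀ (G.run v₀ P' t₀) ς h = ς (cur v₀ h) := by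
      unfold mimic
      rw [if_neg hc]
    rw [this]
    exact hς (cur v₀ h)

lemma mimic_isStrat (hP' : G.IsProfile v₀ P') (hς : ∀ v, G.E v (ς v)) (j : ι) :
    G.IsStrat v₀ j (mimic v₀ (G.run v₀ P' t₀) ς) :=
  fun h _ _ => G.mimic_edge v₀ hP' hς h

lemma mimic_tail {Q : ι → List V → V} {j : ι} {t : ℕ} (ht : t₀ ≤ t)
    (hown : G.owner (G.outcome v₀ (Function.update Q j (mimic v₀ (G.run v₀ P' t₀) ς)) t) = j) :
    G.outcome v₀ (Function.update Q j (mimic v₀ (G.run v₀ P' t₀) ς)) (t + 1)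
      = ς (G.outcome v₀ (Function.update Q j (mimic v₀ (G.run v₀ P' t₀) ς)) t) := by
  have hstep : G.outcome v₀ (Function.update Q j (mimic v₀ (G.run v₀ P' t₀) ς)) (t+1)
      = Function.update Q j (mimic v₀ (G.run v₀ P' t₀) ς)
          (G.owner (cur v₀ (G.run v₀ (Function.update Q j (mimic v₀ (G.run v₀ P' t₀) ς)) t)))
          (G.run v₀ (Function.update Q j (mimic v₀ (G.run v₀ P' t₀) ς)) t) := by
    rw [G.outcome_eq_cur, G.run_succ]; rfl
  have hcurown :
      G.owner (cur v₀ (G.run v₀ (Function.update Q j (mimic v₀ (G.run v₀ P' t₀) ς)) t)) = j := by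
    rw [← G.outcome_eq_cur]; exact hown
  rw [hstep, hcurown, Function.update_self]
  have hnot : ¬ (1 ≤ (G.run v₀ (Function.update Q j (mimic v₀ (G.run v₀ P' t₀) ς)) t).length
      ∧ (G.run v₀ (Function.update Q j (mimic v₀ (G.run v₀ P' t₀) ς)) t).length
          < (G.run v₀ P' t₀).length
      ∧ G.run v₀ (Function.update Q j (mimic v₀ (G.run v₀ P' t₀) ς)) t <:+ G.run v₀ P' t₀) := by
    rintro ⟨_, h2, _⟩
    rw [G.length_run, G.length_run] at h2
    omega
  rw [mimic_long v₀ hnot, ← G.outcome_eq_cur]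

/-- The realization lemma: the play against `σ` in which `j` replays the prefix
of the deviation play (and then follows `ς`) agrees with it up to `t₀`. -/
lemma mimic_run_agree {σ : ι → List V → V} {j : ι}
    (hP' : G.IsProfile v₀ P')
    (hcons : ∀ s, s < t₀ → G.owner (G.outcome v₀ P' s) ≠ j →
      σ (G.owner (G.outcome v₀ P' s)) (G.run v₀ P' s) = G.outcome v₀ P' (s + 1)) :
    ∀ t, t ≤ t₀ →
      G.run v₀ (Function.update σ j (mimic v₀ (G.run v₀ P' t₀) ς)) t = G.run v₀ P' t := by
  intro t ht
  induction t with
  | zero => rw [G.run_zero, G.run_zero]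
  | succ n ih =>
    have ihn := ih (by omega)
    rw [G.run_succ, G.run_succ, ihn]
    congr 1
    have hR : P' (G.owner (cur v₀ (G.run v₀ P' n))) (G.run v₀ P' n)
        = G.outcome v₀ P' (n+1) := by
      rw [G.outcome_eq_cur, G.run_succ]; rfl
    rw [hR]
    by_cases hj : G.owner (cur v₀ (G.run v₀ P' n)) = j
    · rw [hj, Function.update_self]
      exact G.mimic_suffix_move v₀ hP' (show n < t₀ by omega)
    · rw [Function.update_of_ne hj]
      have hj' : G.owner (G.outcome v₀ P' n) ≠ j := by
        rw [G.outcome_eq_cur]; exact hj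
      have := hcons n (by omega) hj'
      rw [G.outcome_eq_cur v₀ P' n] at this
      exact this

lemma mimic_outcome_agree {σ : ι → List V → V} {j : ι}
    (hP' : G.IsProfile v₀ P')
    (hcons : ∀ s, s < t₀ → G.owner (G.outcome v₀ P' s) ≠ j →
      σ (G.owner (G.outcome v₀ P' s)) (G.run v₀ P' s) = G.outcome v₀ P' (s + 1)) :
    ∀ t, t ≤ t₀ →
      G.outcome v₀ (Function.update σ j (mimic v₀ (G.run v₀ P' t₀) ς)) t
        = G.outcome v₀ P' t := by
  intro t ht
  rw [G.outcome_eq_cur, G.outcome_eq_cur, G.mimic_run_agree v₀ hP' hcons t ht]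

end Mimic

end QRGame
namespace QRGame

section Punish

set_option linter.unusedSectionVars false
set_option maxHeartbeats 1000000

variable {ι V : Type} [Fintype ι] [Fintype V] [DecidableEq ι]
variable {G : QRGame ι V} {v₀ : V} {σ : ι → List V → V} {j : ι} {σ' : List V → V} {d : ℕ}

lemma isProfile_update {s : List V → V} (hprof : G.IsProfile v₀ σ)
    (hstrat : G.IsStrat v₀ j s) : G.IsProfile v₀ (Function.update σ j s) := by
  intro i h hh hown
  by_cases hij : i = j
  · subst hij
    rw [Function.update_self]
    exact hstrat h hh hown
  · rw [Function.update_of_ne hij]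
    exact hprof i h hh hown

/-- Applying security of `σ` to a constructed deviation. -/
lemma no_sigma_prec (hsec : G.IsSecure v₀ σ) {σ'' : List V → V}
    (hstrat'' : G.IsStrat v₀ j σ'')
    (hp : Prec j (fun i => G.cost i (G.outcome v₀ σ))
      (fun i => G.cost i (G.outcome v₀ (Function.update σ j σ'')))) : False :=
  hsec ⟨j, σ'', hstrat'', hp⟩

/-- Escape argument: the deviation play cannot enter the region from which the
deviator can force his goal, when his cost is infinite. -/
lemma ja_escape (hprof : G.IsProfile v₀ σ) (hsec : G.IsSecure v₀ σ)
    (hstrat : G.IsStrat v₀ j σ') {t₀ : ℕ}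
    (hcons : ∀ s, s < t₀ →
      G.owner (G.outcome v₀ (Function.update (G.tau v₀ σ) j σ') s) ≠ j →
      σ (G.owner (G.outcome v₀ (Function.update (G.tau v₀ σ) j σ') s))
          (G.run v₀ (Function.update (G.tau v₀ σ) j σ') s)
        = G.outcome v₀ (Function.update (G.tau v₀ σ) j σ') (s + 1))
    (hxj : G.cost j (G.outcome v₀ σ) = ⊤)
    (hq : G.outcome v₀ (Function.update (G.tau v₀ σ) j σ') t₀ ∈ G.JA j) : False := by
  classical
  set Pd := Function.update (G.tau v₀ σ) j σ' with hPdDef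
  have hPd : G.IsProfile v₀ Pd :=
    isProfile_update (G.tau_isProfile v₀ σ hprof) hstrat
  set ς : V → V := G.amove (fun u => G.owner u = j) Set.univ (G.F j) with hςdef
  have hς : ∀ v, G.E v (ς v) := fun v => G.amove_edge _ _ _ v
  set σ'' := mimic v₀ (G.run v₀ Pd t₀) ς with hσ''
  have hstrat'' : G.IsStrat v₀ j σ'' := G.mimic_isStrat v₀ hPd hς j
  have hQprof : G.IsProfile v₀ (Function.update σ j σ'') :=
    isProfile_update hprof hstrat''
  have hagree : ∀ t, t ≤ t₀ →
      G.outcome v₀ (Function.update σ j σ'') t = G.outcome v₀ Pd t :=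
    G.mimic_outcome_agree v₀ hPd hcons
  -- the deviator reaches his goal against σ
  obtain ⟨n, hn⟩ := (G.mem_attr_iff _ _ _).mp (by
    rw [← hagree t₀ le_rfl] at hq
    exact hq)
  obtain ⟨k, _, hk⟩ := G.attr_reach (fun u => G.owner u = j) Set.univ (G.F j)
    (G.outcome v₀ (Function.update σ j σ'')) n t₀ hn
    (fun t ht hP _ _ => G.mimic_tail v₀ ht hP)
    (fun t _ => G.run_edge v₀ hQprof t)
  refine no_sigma_prec hsec hstrat'' (Or.inl ?_)
  have hle : G.cost j (G.outcome v₀ (Function.update σ j σ'')) ≤ ((t₀ + k : ℕ) : ℕ∞) :=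
    G.cost_le_of_mem hk.1
  show G.cost j (G.outcome v₀ (Function.update σ j σ'')) < G.cost j (G.outcome v₀ σ)
  rw [hxj]
  exact lt_of_le_of_lt hle (ENat.coe_lt_top _)

/-- `j`-escape move away from the coalition's winning region. -/
noncomputable def sout (G : QRGame ι V) (v₀ : V) (σ : ι → List V → V) (j : ι) (v : V) : V :=
  if h : ∃ w, G.E v w ∧ w ∉ G.WW v₀ σ j then h.choose else G.anyE v

lemma sout_edge (v : V) : G.E v (G.sout v₀ σ j v) := by
  unfold sout
  split
  · next h => exact h.choose_spec.1
  · exact G.anyE_edge v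

/-- `j`-escape move for the infinite-cost case: follow the attractor towards
`F j` when possible, otherwise stay inside `WSx \ WW`. -/
noncomputable def smix (G : QRGame ι V) (v₀ : V) (σ : ι → List V → V) (j : ι) (v : V) : V :=
  if v ∈ G.JA j then G.amove (fun u => G.owner u = j) Set.univ (G.F j) v
  else if h : ∃ w, G.E v w ∧ w ∈ G.WSx v₀ σ j \ G.WW v₀ σ j then h.choose
  else G.anyE v

lemma smix_edge (v : V) : G.E v (G.smix v₀ σ j v) := by
  unfold smix
  split
  · exact G.amove_edge _ _ _ v
  · split
    · next h => exact h.choose_spec.1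
    · exact G.anyE_edge v

end Punish

end QRGame
namespace QRGame

section Punish2

set_option linter.unusedSectionVars false
set_option maxHeartbeats 1000000

variable {ι V : Type} [Fintype ι] [Fintype V] [DecidableEq ι]
variable {G : QRGame ι V} {v₀ : V} {σ : ι → List V → V} {j : ι} {σ' : List V → V} {d : ℕ}

lemma F_subset_JA : G.F j ⊆ G.JA j := fun v hv =>
  G.base_subset_attr _ _ _ ⟨hv, trivial⟩

lemma FA_inter_WSx_subset_WW : G.FA v₀ σ ∩ G.WSx v₀ σ j ⊆ G.WW v₀ σ j :=
  G.base_subset_attr _ _ _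

lemma WSx_top (hxj : G.cost j (G.outcome v₀ σ) = ⊤) : G.WSx v₀ σ j = (G.JA j)ᶜ :=
  if_pos hxj

lemma WSx_fin (hxj : G.cost j (G.outcome v₀ σ) ≠ ⊤) : G.WSx v₀ σ j = Set.univ :=
  if_neg hxj

/-- Cost of the outcome of `σ`, as a natural number, when finite. -/
lemma x_fin_spec {i : ι} (h : G.cost i (G.outcome v₀ σ) ≠ ⊤) :
    ∃ c : ℕ, G.cost i (G.outcome v₀ σ) = (c : ℕ∞) ∧ c ≤ G.MM v₀ σ ∧
      G.outcome v₀ σ c ∈ G.F i ∧ ∀ l, l < c → G.outcome v₀ σ l ∉ G.F i := by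
  obtain ⟨c, hc, hv, hcl⟩ := G.cost_spec h
  refine ⟨c, hc, ?_, hv, hcl⟩
  have := G.cost_le_MM v₀ σ h
  rw [hc] at this
  exact_mod_cast this

/-- Builds the dominating–harming relation for a realized deviation play. -/
lemma prec_second_build
    (hclean : ∀ (i : ι) (l : ℕ), l ≤ G.MM v₀ σ →
      (l : ℕ∞) < G.cost i (G.outcome v₀ σ) →
      G.outcome v₀ (Function.update (G.tau v₀ σ) j σ') l ∉ G.F i)
    (hharm : ∃ (i₀ : ι) (c₀ : ℕ), G.cost i₀ (G.outcome v₀ σ) = (c₀ : ℕ∞) ∧ c₀ ≤ G.MM v₀ σ ∧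
      ∀ l, l ≤ c₀ → G.outcome v₀ (Function.update (G.tau v₀ σ) j σ') l ∉ G.F i₀)
    {p : ℕ → V}
    (hag : ∀ l, l ≤ G.MM v₀ σ → p l = G.outcome v₀ (Function.update (G.tau v₀ σ) j σ') l)
    (htop : ∀ i, G.cost i (G.outcome v₀ σ) = ⊤ → ∀ l, p l ∉ G.F i)
    (hjc : G.cost j p = G.cost j (G.outcome v₀ σ)) :
    Prec j (fun i => G.cost i (G.outcome v₀ σ)) (fun i => G.cost i p) := by
  refine Or.inr ⟨hjc.symm, ?_, ?_⟩
  · intro i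
    by_cases hxi : G.cost i (G.outcome v₀ σ) = ⊤
    · show G.cost i (G.outcome v₀ σ) ≤ G.cost i p
      rw [hxi, G.cost_eq_top (htop i hxi)]
    · obtain ⟨c, hc, hcM, _, _⟩ := x_fin_spec hxi
      show G.cost i (G.outcome v₀ σ) ≤ G.cost i p
      rw [hc]
      refine G.le_cost fun l hl => ?_
      rw [hag l (by omega)]
      refine hclean i l (by omega) ?_
      rw [hc]
      exact_mod_cast hl
  · obtain ⟨i₀, c₀, hc₀, hc₀M, hcl⟩ := hharm
    refine ⟨i₀, ?_⟩
    show G.cost i₀ (G.outcome v₀ σ) < G.cost i₀ p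
    have hge : ((c₀ + 1 : ℕ) : ℕ∞) ≤ G.cost i₀ p := by
      refine G.le_cost fun l hl => ?_
      rw [hag l (by omega)]
      exact hcl l (by omega)
    refine lt_of_lt_of_le ?_ hge
    rw [hc₀]
    exact_mod_cast Nat.lt_succ_self c₀

lemma smix_of_mem {v : V} (h : v ∈ G.JA j) :
    G.smix v₀ σ j v = G.amove (fun u => G.owner u = j) Set.univ (G.F j) v := by
  unfold smix
  rw [if_pos h]

lemma smix_mem_target {v : V} (h1 : v ∉ G.JA j)
    (hex : ∃ w, G.E v w ∧ w ∈ G.WSx v₀ σ j \ G.WW v₀ σ j) :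
    G.smix v₀ σ j v ∈ G.WSx v₀ σ j \ G.WW v₀ σ j := by
  unfold smix
  rw [if_neg h1, dif_pos hex]
  exact hex.choose_spec.2

lemma sout_mem_target {v : V} (hex : ∃ w, G.E v w ∧ w ∉ G.WW v₀ σ j) :
    G.sout v₀ σ j v ∉ G.WW v₀ σ j := by
  unfold sout
  rw [dif_pos hex]
  exact hex.choose_spec.2

/-- The entry lemma: under a dominating–harming deviation, at time `M` the play
has entered the coalition's punishing region. -/
lemma entry (hprof : G.IsProfile v₀ σ) (hsec : G.IsSecure v₀ σ)
    (hstrat : G.IsStrat v₀ j σ') (hd : G.DivData v₀ σ j σ' d)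
    (hdM : d < G.MM v₀ σ)
    (hclean : ∀ (i : ι) (l : ℕ), l ≤ G.MM v₀ σ →
      (l : ℕ∞) < G.cost i (G.outcome v₀ σ) →
      G.outcome v₀ (Function.update (G.tau v₀ σ) j σ') l ∉ G.F i)
    (hharm : ∃ (i₀ : ι) (c₀ : ℕ), G.cost i₀ (G.outcome v₀ σ) = (c₀ : ℕ∞) ∧ c₀ ≤ G.MM v₀ σ ∧
      ∀ l, l ≤ c₀ → G.outcome v₀ (Function.update (G.tau v₀ σ) j σ') l ∉ G.F i₀)
    (hsched : G.cost j (G.outcome v₀ σ) = ⊤ ∨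
      ∃ cj : ℕ, G.cost j (G.outcome v₀ σ) = (cj : ℕ∞) ∧ cj ≤ G.MM v₀ σ ∧
        G.outcome v₀ (Function.update (G.tau v₀ σ) j σ') cj ∈ G.F j) :
    G.outcome v₀ (Function.update (G.tau v₀ σ) j σ') (G.MM v₀ σ) ∈ G.WW v₀ σ j := by
  classical
  set M := G.MM v₀ σ with hMdef
  set Pd := Function.update (G.tau v₀ σ) j σ' with hPdDef
  have hPd : G.IsProfile v₀ Pd :=
    isProfile_update (G.tau_isProfile v₀ σ hprof) hstrat
  have hconsM : ∀ s, s < M →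
      G.owner (G.outcome v₀ Pd s) ≠ j →
      σ (G.owner (G.outcome v₀ Pd s)) (G.run v₀ Pd s) = G.outcome v₀ Pd (s + 1) :=
    fun s hs hown => (hd.coalition_sigma (Or.inl hs) hown).symm
  by_contra hq
  by_cases hxj : G.cost j (G.outcome v₀ σ) = ⊤
  · -- infinite-cost deviator
    have hWSx : G.WSx v₀ σ j = (G.JA j)ᶜ := WSx_top hxj
    have hq₀JA : G.outcome v₀ Pd M ∉ G.JA j := fun hJA =>
      ja_escape hprof hsec hstrat hconsM hxj hJA
    -- realize the deviation against σ with the mixed escape strategy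
    set ς : V → V := G.smix v₀ σ j with hςdef
    have hς : ∀ v, G.E v (ς v) := fun v => smix_edge v
    set σ'' := mimic v₀ (G.run v₀ Pd M) ς with hσ''
    have hstrat'' : G.IsStrat v₀ j σ'' := G.mimic_isStrat v₀ hPd hς j
    have hQprof : G.IsProfile v₀ (Function.update σ j σ'') :=
      isProfile_update hprof hstrat''
    have hagree : ∀ t, t ≤ M →
        G.outcome v₀ (Function.update σ j σ'') t = G.outcome v₀ Pd t :=
      G.mimic_outcome_agree v₀ hPd hconsM
    by_cases hEnter : ∃ k, M ≤ k ∧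
        G.outcome v₀ (Function.update σ j σ'') k ∈ G.JA j
    · -- the realized play enters the deviator's forcing region: he reaches F j
      obtain ⟨k₁, hk₁M, hk₁⟩ := hEnter
      obtain ⟨n, hn⟩ := (G.mem_attr_iff _ _ _).mp hk₁
      obtain ⟨k, _, hk⟩ := G.attr_reach (fun u => G.owner u = j) Set.univ (G.F j)
        (G.outcome v₀ (Function.update σ j σ'')) n k₁ hn
        (fun t ht hP hattr _ => by
          have := G.mimic_tail v₀ (le_trans hk₁M ht) hP
          rw [this]
          exact smix_of_mem hattr)
        (fun t _ => G.run_edge v₀ hQprof t)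
      refine no_sigma_prec hsec hstrat'' (Or.inl ?_)
      show G.cost j (G.outcome v₀ (Function.update σ j σ'')) < G.cost j (G.outcome v₀ σ)
      rw [hxj]
      exact lt_of_le_of_lt (G.cost_le_of_mem hk.1) (ENat.coe_lt_top _)
    · -- the realized play stays in `WSx \ WW` forever
      push_neg at hEnter
      have hInv : ∀ t, M ≤ t →
          G.outcome v₀ (Function.update σ j σ'') t ∈ G.WSx v₀ σ j \ G.WW v₀ σ j := by
        intro t ht
        induction t, ht using Nat.le_induction with
        | base =>
          rw [hagree M le_rfl]
          exact ⟨by rw [hWSx]; exact hq₀JA, hq⟩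
        | succ t ht ih =>
          have hnJA : G.outcome v₀ (Function.update σ j σ'') (t+1) ∉ G.JA j :=
            hEnter (t+1) (by omega)
          refine ⟨by rw [hWSx]; exact hnJA, ?_⟩
          by_cases hast : G.owner (G.outcome v₀ (Function.update σ j σ'') t) = j
          · -- deviator's move: smix stays outside WW
            have hmv := G.mimic_tail v₀ ht hast
            rw [hmv]
            have hvJA : G.outcome v₀ (Function.update σ j σ'') t ∉ G.JA j := by
              have := ih.1
              rw [hWSx] at this
              exact this
            have hex : ∃ w, G.E (G.outcome v₀ (Function.update σ j σ'') t) w ∧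
                w ∈ G.WSx v₀ σ j \ G.WW v₀ σ j := by
              by_contra hnex
              push_neg at hnex
              -- then all moves are in WW, so v would be in WW
              have hall : ∀ w, G.E (G.outcome v₀ (Function.update σ j σ'') t) w →
                  w ∈ G.WW v₀ σ j := by
                intro w hw
                by_contra hwWW
                have hwJA : w ∉ G.JA j := fun hwJA =>
                  hvJA (G.mem_attr_of_ctrl _ _ _ hast trivial hw hwJA)
                exact hwWW (by
                  have := hnex w hw ⟨by rw [hWSx]; exact hwJA, hwWW⟩
                  exact this.elim)
              exact ih.2 (G.mem_attr_of_adv _ _ _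
                (by simp [hast]) ih.1 hall)
            exact (smix_mem_target hvJA hex).2
          · -- coalition's move cannot enter WW from outside
            intro hWW
            have hedge := G.run_edge v₀ hQprof t
            exact ih.2 (G.mem_attr_of_ctrl _ _ _ hast ih.1 hedge hWW)
      -- build the dominating–harming relation and contradict security of σ
      refine no_sigma_prec hsec hstrat'' (prec_second_build hclean hharm
        (fun l hl => hagree l hl) ?_ ?_)
      · intro i hxi l hli
        rcases Nat.lt_or_ge l (M+1) with hlM | hlM
        · rw [hagree l (by omega)] at hli
          exact hclean i l (by omega) (by rw [hxi]; exact ENat.coe_lt_top l) hli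
        · have := hInv l (by omega)
          have hFA : G.outcome v₀ (Function.update σ j σ'') l ∈ G.FA v₀ σ := ⟨i, hxi, hli⟩
          exact this.2 (FA_inter_WSx_subset_WW ⟨hFA, this.1⟩)
      · rw [hxj]
        refine G.cost_eq_top fun l hl => ?_
        rcases Nat.lt_or_ge l (M+1) with hlM | hlM
        · rw [hagree l (by omega)] at hl
          exact hclean j l (by omega) (by rw [hxj]; exact ENat.coe_lt_top l) hl
        · have := (hInv l (by omega)).1
          rw [hWSx] at this
          exact this (F_subset_JA hl)
  · -- finite-cost deviator
    have hWSx : G.WSx v₀ σ j = Set.univ := WSx_fin hxj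
    obtain ⟨cj, hcj, hcjM, hcjvis⟩ := hsched.resolve_left hxj
    set ς : V → V := G.sout v₀ σ j with hςdef
    have hς : ∀ v, G.E v (ς v) := fun v => sout_edge v
    set σ'' := mimic v₀ (G.run v₀ Pd M) ς with hσ''
    have hstrat'' : G.IsStrat v₀ j σ'' := G.mimic_isStrat v₀ hPd hς j
    have hQprof : G.IsProfile v₀ (Function.update σ j σ'') :=
      isProfile_update hprof hstrat''
    have hagree : ∀ t, t ≤ M →
        G.outcome v₀ (Function.update σ j σ'') t = G.outcome v₀ Pd t :=
      G.mimic_outcome_agree v₀ hPd hconsM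
    have hInv : ∀ t, M ≤ t →
        G.outcome v₀ (Function.update σ j σ'') t ∉ G.WW v₀ σ j := by
      intro t ht
      induction t, ht using Nat.le_induction with
      | base =>
        rw [hagree M le_rfl]
        exact hq
      | succ t ht ih =>
        by_cases hast : G.owner (G.outcome v₀ (Function.update σ j σ'') t) = j
        · have hmv := G.mimic_tail v₀ ht hast
          rw [hmv]
          have hex : ∃ w, G.E (G.outcome v₀ (Function.update σ j σ'') t) w ∧
              w ∉ G.WW v₀ σ j := by
            by_contra hnex
            push_neg at hnex
            exact ih (G.mem_attr_of_adv _ _ _ (by simp [hast])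
              (by rw [hWSx]; trivial) hnex)
          exact sout_mem_target hex
        · intro hWW
          have hedge := G.run_edge v₀ hQprof t
          exact ih (G.mem_attr_of_ctrl _ _ _ hast (by rw [hWSx]; trivial) hedge hWW)
    refine no_sigma_prec hsec hstrat'' (prec_second_build hclean hharm
      (fun l hl => hagree l hl) ?_ ?_)
    · intro i hxi l hli
      rcases Nat.lt_or_ge l (M+1) with hlM | hlM
      · rw [hagree l (by omega)] at hli
        exact hclean i l (by omega) (by rw [hxi]; exact ENat.coe_lt_top l) hli
      · have := hInv l (by omega)
        have hFA : G.outcome v₀ (Function.update σ j σ'') l ∈ G.FA v₀ σ := ⟨i, hxi, hli⟩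
        exact this (FA_inter_WSx_subset_WW ⟨hFA, by rw [hWSx]; trivial⟩)
    · rw [hcj]
      refine le_antisymm ?_ ?_
      · refine G.cost_le_of_mem ?_
        rw [hagree cj (by omega)]
        exact hcjvis
      · refine G.le_cost fun l hl => ?_
        rw [hagree l (by omega)]
        refine hclean j l (by omega) ?_
        rw [hcj]
        exact_mod_cast hl

/-- From the punishing region, the coalition forces a visit to `FA` within
`card V - 1` steps. -/
lemma punish_reach (hprof : G.IsProfile v₀ σ) (hstrat : G.IsStrat v₀ j σ')
    (hd : G.DivData v₀ σ j σ' d) (hdM : d < G.MM v₀ σ)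
    (hq : G.outcome v₀ (Function.update (G.tau v₀ σ) j σ') (G.MM v₀ σ) ∈ G.WW v₀ σ j) :
    ∃ k, k ≤ Fintype.card V - 1 ∧
      G.outcome v₀ (Function.update (G.tau v₀ σ) j σ') (G.MM v₀ σ + k)
        ∈ G.FA v₀ σ ∩ G.WSx v₀ σ j := by
  classical
  set M := G.MM v₀ σ with hMdef
  set Pd := Function.update (G.tau v₀ σ) j σ' with hPdDef
  have hPd : G.IsProfile v₀ Pd :=
    isProfile_update (G.tau_isProfile v₀ σ hprof) hstrat
  have hne : (G.FA v₀ σ ∩ G.WSx v₀ σ j).Nonempty := by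
    rcases Set.eq_empty_or_nonempty (G.FA v₀ σ ∩ G.WSx v₀ σ j) with he | hne
    · rw [WW, G.attr_empty _ _ _ he] at hq
      exact absurd hq (Set.notMem_empty _)
    · exact hne
  have hmem : G.outcome v₀ Pd M ∈ G.attrN (fun v => G.owner v ≠ j)
      (G.WSx v₀ σ j) (G.FA v₀ σ) (Fintype.card V - 1) := by
    have := hq
    rw [WW, G.attr_eq_attrN _ _ _ hne] at this
    exact this
  exact G.attr_reach _ _ _ (G.outcome v₀ Pd) (Fintype.card V - 1) M hmem
    (fun t ht hP hattr hbase => by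
      have hmv := hd.coalition_pim (show d < t by omega) (by omega) hP
      rw [hmv]
      show G.pim v₀ σ j _ = _
      unfold pim
      rw [if_pos ⟨by rw [WW]; exact hattr, hbase⟩])
    (fun t _ => G.run_edge v₀ hPd t)

end Punish2

end QRGame
namespace QRGame

section FinalHelpers

set_option linter.unusedSectionVars false
set_option maxHeartbeats 1000000

variable {ι V : Type} [Fintype ι] [Fintype V] [DecidableEq ι]
variable {G : QRGame ι V} {v₀ : V} {σ : ι → List V → V} {j : ι} {σ' : List V → V} {d : ℕ}

lemma prec_irrefl (x : ι → ℕ∞) : ¬ Prec j x x := by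
  rintro (h | ⟨_, _, i, h⟩) <;> exact lt_irrefl _ h

lemma notMem_of_cost_top {ρ : ℕ → V} {i : ι} (h : G.cost i ρ = ⊤) (l : ℕ) :
    ρ l ∉ G.F i := by
  intro hl
  have := G.cost_le_of_mem hl
  rw [h, top_le_iff] at this
  exact ENat.coe_ne_top l this

lemma exists_divdata
    (hne : G.outcome v₀ (Function.update (G.tau v₀ σ) j σ') ≠ G.outcome v₀ σ) :
    ∃ d, G.DivData v₀ σ j σ' d := by
  classical
  have hex : ∃ t, G.outcome v₀ (Function.update (G.tau v₀ σ) j σ') t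
      ≠ G.outcome v₀ σ t := by
    by_contra h
    push_neg at h
    exact hne (funext h)
  set k := Nat.find hex with hk
  have hk0 : k ≠ 0 := by
    intro h0
    have := Nat.find_spec hex
    rw [← hk, h0] at this
    exact this (by rw [G.outcome_zero, G.outcome_zero])
  refine ⟨k - 1, ?_, ?_⟩
  · intro s hs
    by_contra hc
    have := Nat.find_min' hex hc
    omega
  · have := Nat.find_spec hex
    rw [← hk] at this
    have hkk : k - 1 + 1 = k := by omega
    rw [hkk]
    exact this

lemma ja_closed_j {v w : V} (hv : v ∉ G.JA j) (hown : G.owner v = j) (hw : G.E v w) :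
    w ∉ G.JA j :=
  fun hwJA => hv (G.mem_attr_of_ctrl _ _ _ hown trivial hw hwJA)

lemma pim_mem_WSx (hxj : G.cost j (G.outcome v₀ σ) = ⊤) {v : V}
    (hv : v ∈ G.WSx v₀ σ j) (hown : G.owner v ≠ j) : G.pim v₀ σ j v ∈ G.WSx v₀ σ j := by
  unfold pim
  split
  · next hc =>
    exact G.amove_mem_C _ _ _ hc.1 hc.2 hown
  · refine wsmove_mem G v₀ σ ?_
    have hvJA : v ∉ G.JA j := by
      rw [WSx_top hxj] at hv
      exact hv
    have hex : ∃ w, G.E v w ∧ w ∉ G.JA j := by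
      by_contra hnex
      push_neg at hnex
      exact hvJA (G.mem_attr_of_adv _ _ _ (by simp [hown]) trivial hnex)
    obtain ⟨w, hw1, hw2⟩ := hex
    exact ⟨w, hw1, by rw [WSx_top hxj]; exact hw2⟩

/-- Security of the modified profile `τ`. -/
theorem tau_secure (hprof : G.IsProfile v₀ σ) (hsec : G.IsSecure v₀ σ) :
    G.IsSecure v₀ (G.tau v₀ σ) := by
  rintro ⟨j, σ', hstrat, hPrec⟩
  classical
  set M := G.MM v₀ σ with hMdef
  set Pd := Function.update (G.tau v₀ σ) j σ' with hPdDef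
  have hPd : G.IsProfile v₀ Pd :=
    isProfile_update (G.tau_isProfile v₀ σ hprof) hstrat
  have hfp : (fun i => G.cost i (G.fullPlay v₀ (G.tau v₀ σ) [v₀]))
      = fun i => G.cost i (G.outcome v₀ σ) := by
    funext i
    exact congrArg (G.cost i) (G.tau_outcome_eq v₀ σ)
  rw [hfp] at hPrec
  have hPrec' : Prec j (fun i => G.cost i (G.outcome v₀ σ))
      (fun i => G.cost i (G.outcome v₀ Pd)) := hPrec
  by_cases hsame : G.outcome v₀ Pd = G.outcome v₀ σ
  · rw [show (fun i => G.cost i (G.outcome v₀ Pd))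
        = fun i => G.cost i (G.outcome v₀ σ) from funext fun i =>
          congrArg (G.cost i) hsame] at hPrec'
    exact prec_irrefl _ hPrec'
  obtain ⟨d, hd⟩ := exists_divdata hsame
  rcases hPrec' with hlt | ⟨heq, hdom, i₀, hstrict⟩
  · -- first disjunct: the deviator improves his cost
    have hltj : G.cost j (G.outcome v₀ Pd) < G.cost j (G.outcome v₀ σ) := hlt
    have hcne : G.cost j (G.outcome v₀ Pd) ≠ ⊤ := hltj.ne_top
    obtain ⟨c, hc, hcvis, hcbef⟩ := G.cost_spec hcne
    by_cases hcM : c ≤ M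
    · -- early improvement: realize it against σ
      have hcons : ∀ s, s < c →
          G.owner (G.outcome v₀ Pd s) ≠ j →
          σ (G.owner (G.outcome v₀ Pd s)) (G.run v₀ Pd s) = G.outcome v₀ Pd (s + 1) :=
        fun s hs hown => (hd.coalition_sigma (Or.inl (by omega)) hown).symm
      have hς : ∀ v, G.E v (G.anyE v) := fun v => G.anyE_edge v
      have hstrat'' : G.IsStrat v₀ j (mimic v₀ (G.run v₀ Pd c) G.anyE) :=
        G.mimic_isStrat v₀ hPd hς j
      have hagree := G.mimic_outcome_agree v₀ (ς := G.anyE) hPd hcons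
      refine no_sigma_prec hsec hstrat'' (Or.inl ?_)
      show G.cost j _ < G.cost j (G.outcome v₀ σ)
      calc G.cost j (G.outcome v₀ (Function.update σ j (mimic v₀ (G.run v₀ Pd c) G.anyE)))
          ≤ (c : ℕ∞) := G.cost_le_of_mem (by rw [hagree c le_rfl]; exact hcvis)
        _ = G.cost j (G.outcome v₀ Pd) := hc.symm
        _ < G.cost j (G.outcome v₀ σ) := hltj
    · -- late improvement: only possible if the deviator's cost is infinite
      have hxj : G.cost j (G.outcome v₀ σ) = ⊤ := by
        by_contra hx
        obtain ⟨cx, hcx, hcxM, _, _⟩ := x_fin_spec hx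
        rw [hc, hcx] at hltj
        have : c < cx := by exact_mod_cast hltj
        omega
      have hcd : d < c := by
        by_contra hcd
        push_neg at hcd
        have := hd.1 c hcd
        rw [this] at hcvis
        exact notMem_of_cost_top hxj c hcvis
      set t₀ := max (d+1) M with ht₀
      have hcons : ∀ s, s < t₀ →
          G.owner (G.outcome v₀ Pd s) ≠ j →
          σ (G.owner (G.outcome v₀ Pd s)) (G.run v₀ Pd s) = G.outcome v₀ Pd (s + 1) := by
        intro s hs hown
        refine (hd.coalition_sigma ?_ hown).symm
        rcases Nat.lt_or_ge s M with h | h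
        · exact Or.inl h
        · right; omega
      have hq0 : G.outcome v₀ Pd t₀ ∉ G.JA j := fun hJA =>
        ja_escape hprof hsec hstrat hcons hxj hJA
      have hInv : ∀ t, t₀ ≤ t → G.outcome v₀ Pd t ∉ G.JA j := by
        intro t ht
        induction t, ht using Nat.le_induction with
        | base => exact hq0
        | succ t ht ih =>
          by_cases hast : G.owner (G.outcome v₀ Pd t) = j
          · exact ja_closed_j ih hast (G.run_edge v₀ hPd t)
          · have := hd.coalition_pim (show d < t by omega) (by omega) hast
            rw [this]
            have := pim_mem_WSx hxj (by rw [WSx_top hxj]; exact ih) hast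
            rw [WSx_top hxj] at this
            exact this
      have hct₀ : t₀ ≤ c := by omega
      exact hInv c hct₀ (F_subset_JA hcvis)
  · -- second disjunct: dominating–harming deviation
    have hdom' : ∀ i, G.cost i (G.outcome v₀ σ) ≤ G.cost i (G.outcome v₀ Pd) := hdom
    have hclean : ∀ (i : ι) (l : ℕ), l ≤ M →
        (l : ℕ∞) < G.cost i (G.outcome v₀ σ) → G.outcome v₀ Pd l ∉ G.F i := by
      intro i l _ hl hmem
      have h1 := G.cost_le_of_mem hmem
      exact absurd (lt_of_le_of_lt (le_trans (hdom' i) h1) hl) (lt_irrefl _)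
    have hstrict' : G.cost i₀ (G.outcome v₀ σ) < G.cost i₀ (G.outcome v₀ Pd) := hstrict
    obtain ⟨c₀, hc₀, hc₀M, hc₀vis, _⟩ := x_fin_spec hstrict'.ne_top
    have hharm : ∃ (i₁ : ι) (c₁ : ℕ), G.cost i₁ (G.outcome v₀ σ) = (c₁ : ℕ∞) ∧ c₁ ≤ M ∧
        ∀ l, l ≤ c₁ → G.outcome v₀ Pd l ∉ G.F i₁ := by
      refine ⟨i₀, c₀, hc₀, hc₀M, fun l hl hmem => ?_⟩
      have h1 := G.cost_le_of_mem hmem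
      have h2 : G.cost i₀ (G.outcome v₀ Pd) ≤ (c₀ : ℕ∞) :=
        le_trans h1 (by exact_mod_cast hl)
      rw [← hc₀] at h2
      exact absurd (lt_of_le_of_lt h2 hstrict') (lt_irrefl _)
    have hdM : d < M := by
      have hdc₀ : d < c₀ := by
        by_contra hdc
        push_neg at hdc
        have hvis' : G.outcome v₀ Pd c₀ ∈ G.F i₀ := by
          rw [hd.1 c₀ hdc]
          exact hc₀vis
        have h1 := G.cost_le_of_mem hvis'
        have h2 : G.cost i₀ (G.outcome v₀ Pd) ≤ G.cost i₀ (G.outcome v₀ σ) := by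
          rw [hc₀]; exact h1
        exact absurd (lt_of_le_of_lt h2 hstrict') (lt_irrefl _)
      omega
    have hsched : G.cost j (G.outcome v₀ σ) = ⊤ ∨
        ∃ cj : ℕ, G.cost j (G.outcome v₀ σ) = (cj : ℕ∞) ∧ cj ≤ M ∧
          G.outcome v₀ Pd cj ∈ G.F j := by
      by_cases hxj : G.cost j (G.outcome v₀ σ) = ⊤
      · exact Or.inl hxj
      · obtain ⟨cj, hcj, hcjM, _, _⟩ := x_fin_spec hxj
        have heqj : G.cost j (G.outcome v₀ σ) = G.cost j (G.outcome v₀ Pd) := heq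
        have hcne : G.cost j (G.outcome v₀ Pd) ≠ ⊤ := by rw [← heqj]; exact hxj
        obtain ⟨c', hc', hc'vis, _⟩ := G.cost_spec hcne
        have : (cj : ℕ∞) = (c' : ℕ∞) := by rw [← hcj, ← hc', heqj]
        have hcc : cj = c' := by exact_mod_cast this
        exact Or.inr ⟨cj, hcj, hcjM, by rw [hcc]; exact hc'vis⟩
    have hq₀ := entry hprof hsec hstrat hd hdM hclean hharm hsched
    obtain ⟨k, hk, hvis⟩ := punish_reach hprof hstrat hd hdM hq₀
    obtain ⟨a, hxa, hFa⟩ := hvis.1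
    have h1 := G.cost_le_of_mem hFa
    have h2 := hdom' a
    rw [hxa, top_le_iff] at h2
    rw [h2, top_le_iff] at h1
    exact ENat.coe_ne_top _ h1

end FinalHelpers

end QRGame
namespace QRGame

section Final

set_option linter.unusedSectionVars false
set_option maxHeartbeats 1000000

variable {ι V : Type} [Fintype ι] [Fintype V] [DecidableEq ι]
variable {G : QRGame ι V} {v₀ : V} {σ : ι → List V → V}

/-- Dev-optimality of the modified profile `τ`. -/
theorem tau_devopt (hprof : G.IsProfile v₀ σ) (hsec : G.IsSecure v₀ σ) :
    G.DevOpt v₀ (G.tau v₀ σ) := by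
  intro j σ' hstrat hPrec
  classical
  set M := G.MM v₀ σ with hMdef
  set Pd := Function.update (G.tau v₀ σ) j σ' with hPdDef
  have hPd : G.IsProfile v₀ Pd :=
    isProfile_update (G.tau_isProfile v₀ σ hprof) hstrat
  rw [G.tau_outcome_eq v₀ σ] at hPrec
  set D := G.devBound (G.outcome v₀ σ) with hD
  have hDeq : D = M + Fintype.card V := rfl
  have hcard : 1 ≤ Fintype.card V := @Fintype.card_pos V _ ⟨v₀⟩
  have hMD : M < D := by omega
  -- the truncated cost profile of ρ equals the full one
  have hxLT : (fun i => G.costLT i (G.outcome v₀ σ) D)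
      = fun i => G.cost i (G.outcome v₀ σ) := by
    funext i
    by_cases hxi : G.cost i (G.outcome v₀ σ) = ⊤
    · rw [hxi]
      exact G.costLT_eq_top fun l _ => notMem_of_cost_top hxi l
    · obtain ⟨c, hc, hcM, hcvis, hcbef⟩ := x_fin_spec hxi
      refine le_antisymm ?_ G.cost_le_costLT
      rw [hc]
      exact G.costLT_le_of_mem hcvis (by omega)
  rw [hxLT] at hPrec
  by_cases hsame : G.outcome v₀ Pd = G.outcome v₀ σ
  · rw [show (fun i => G.costLT i (G.outcome v₀ Pd) D)
        = fun i => G.costLT i (G.outcome v₀ σ) D from funext fun i =>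
          congrArg (fun p => G.costLT i p D) hsame, hxLT] at hPrec
    exact prec_irrefl _ hPrec
  obtain ⟨d, hd⟩ := exists_divdata hsame
  rcases hPrec with hlt | ⟨heq, hdom, i₀, hstrict⟩
  · -- first disjunct: contradicts security of τ
    have h1 : G.cost j (G.outcome v₀ Pd) < G.cost j (G.outcome v₀ σ) :=
      lt_of_le_of_lt G.cost_le_costLT hlt
    refine tau_secure hprof hsec ⟨j, σ', hstrat, Or.inl ?_⟩
    show G.cost j (G.fullPlay v₀ Pd [v₀]) < G.cost j (G.fullPlay v₀ (G.tau v₀ σ) [v₀])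
    have h2 : G.cost j (G.fullPlay v₀ (G.tau v₀ σ) [v₀]) = G.cost j (G.outcome v₀ σ) :=
      congrArg (G.cost j) (G.tau_outcome_eq v₀ σ)
    rw [h2]
    exact h1
  · -- second disjunct
    have heq' : G.cost j (G.outcome v₀ σ) = G.costLT j (G.outcome v₀ Pd) D := heq
    have hdom' : ∀ i, G.cost i (G.outcome v₀ σ) ≤ G.costLT i (G.outcome v₀ Pd) D := hdom
    have hstrict' : G.cost i₀ (G.outcome v₀ σ) < G.costLT i₀ (G.outcome v₀ Pd) D := hstrict
    have hclean : ∀ (i : ι) (l : ℕ), l ≤ M →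
        (l : ℕ∞) < G.cost i (G.outcome v₀ σ) → G.outcome v₀ Pd l ∉ G.F i := by
      intro i l hlM hl hmem
      have h1 := G.costLT_le_of_mem (m := D) hmem (by omega)
      exact absurd (lt_of_le_of_lt (le_trans (hdom' i) h1) hl) (lt_irrefl _)
    obtain ⟨c₀, hc₀, hc₀M, hc₀vis, _⟩ := x_fin_spec hstrict'.ne_top
    have hharm : ∃ (i₁ : ι) (c₁ : ℕ), G.cost i₁ (G.outcome v₀ σ) = (c₁ : ℕ∞) ∧ c₁ ≤ M ∧
        ∀ l, l ≤ c₁ → G.outcome v₀ Pd l ∉ G.F i₁ := by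
      refine ⟨i₀, c₀, hc₀, hc₀M, fun l hl hmem => ?_⟩
      have h1 := G.costLT_le_of_mem (m := D) hmem (by omega)
      have h2 : G.costLT i₀ (G.outcome v₀ Pd) D ≤ (c₀ : ℕ∞) :=
        le_trans h1 (by exact_mod_cast hl)
      rw [← hc₀] at h2
      exact absurd (lt_of_le_of_lt h2 hstrict') (lt_irrefl _)
    have hdM : d < M := by
      have hdc₀ : d < c₀ := by
        by_contra hdc
        push_neg at hdc
        have hvis' : G.outcome v₀ Pd c₀ ∈ G.F i₀ := by
          rw [hd.1 c₀ hdc]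
          exact hc₀vis
        have h1 := G.costLT_le_of_mem (m := D) hvis' (by omega)
        have h2 : G.costLT i₀ (G.outcome v₀ Pd) D ≤ G.cost i₀ (G.outcome v₀ σ) := by
          rw [hc₀]; exact h1
        exact absurd (lt_of_le_of_lt h2 hstrict') (lt_irrefl _)
      omega
    have hsched : G.cost j (G.outcome v₀ σ) = ⊤ ∨
        ∃ cj : ℕ, G.cost j (G.outcome v₀ σ) = (cj : ℕ∞) ∧ cj ≤ M ∧
          G.outcome v₀ Pd cj ∈ G.F j := by
      by_cases hxj : G.cost j (G.outcome v₀ σ) = ⊤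
      · exact Or.inl hxj
      · obtain ⟨cj, hcj, hcjM, _, _⟩ := x_fin_spec hxj
        have hcne : G.costLT j (G.outcome v₀ Pd) D ≠ ⊤ := by
          rw [← heq']; exact hxj
        obtain ⟨c', hc', _, hc'vis, _⟩ := G.costLT_spec hcne
        have : (cj : ℕ∞) = (c' : ℕ∞) := by rw [← hcj, heq', hc']
        have hcc : cj = c' := by exact_mod_cast this
        exact Or.inr ⟨cj, hcj, hcjM, by rw [hcc]; exact hc'vis⟩
    have hq₀ := entry hprof hsec hstrat hd hdM hclean hharm hsched
    obtain ⟨k, hk, hvis⟩ := punish_reach hprof hstrat hd hdM hq₀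
    obtain ⟨a, hxa, hFa⟩ := hvis.1
    have h1 : G.costLT a (G.outcome v₀ Pd) D ≤ ((M + k : ℕ) : ℕ∞) :=
      G.costLT_le_of_mem hFa (by omega)
    have h2 := hdom' a
    rw [hxa, top_le_iff] at h2
    rw [h2, top_le_iff] at h1
    exact ENat.coe_ne_top _ h1

end Final

end QRGame

/-- Lemma 5.5: every secure equilibrium can be transformed into a dev-optimal
secure equilibrium with the same outcome. -/
theorem exists_dev_optimal_secure_equilibrium_same_outcome
    {ι V : Type} [Fintype ι] [Fintype V] [DecidableEq ι]
    (G : QRGame ι V) (v₀ : V)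
    (σ : ι → List V → V) (hprof : G.IsProfile v₀ σ) (hsec : G.IsSecure v₀ σ) :
    ∃ τ : ι → List V → V, G.IsProfile v₀ τ ∧ G.IsSecure v₀ τ ∧
      G.DevOpt v₀ τ ∧ G.outcome v₀ τ = G.outcome v₀ σ := by
  exact ⟨G.tau v₀ σ, G.tau_isProfile v₀ σ hprof,
    QRGame.tau_secure hprof hsec, QRGame.tau_devopt hprof hsec,
    G.tau_outcome_eq v₀ σ⟩
end
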